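/- arXiv:1812.01218 — 4 statements merged into one kernel-verified Lean document; each statement's English description precedes it below -/
import Mathlib

section
/- Let n ∈ {2,3,4}, let M be an n-connected binary matroid with |E(M)| ≥ 2n-2, and let T ⊆ E(M) with |T| = n-1. If every cocircuit Q of M containing T satisfies |Q| ≥ 2n-2, then M'_T is n-connected. -/
open Set

variable {α : Type*}

/-- The rank of a set `X` in a matroid `M`: the maximum size of an independent subset of `X`. -/
noncomputable def mrank (M : Matroid α) (X : Set α) : ℕ :=
  sSup {n | ∃ I, M.Indep I ∧ I ⊆ X ∧ I.ncard = n}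

/-- `(A, B)` is a `k`-separation of `M`: a partition of the ground set with both sides of
size at least `k` and `r(A) + r(B) - r(M) ≤ k - 1` (written additively). -/
def IsKSeparation (M : Matroid α) (k : ℕ) (A B : Set α) : Prop :=
  A ∪ B = M.E ∧ Disjoint A B ∧ k ≤ A.ncard ∧ k ≤ B.ncard ∧
    mrank M A + mrank M B + 1 ≤ mrank M M.E + k

/-- `M` is `n`-connected if it has no `k`-separation for any `k < n`. -/
def NConnected (M : Matroid α) (n : ℕ) : Prop :=
  ∀ k A B, 1 ≤ k → k < n → ¬ IsKSeparation M k A B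

/-- A circuit is a minimal dependent set. -/
def MCircuit (M : Matroid α) (C : Set α) : Prop := Minimal M.Dep C

/-- A cocircuit is a circuit of the dual matroid. -/
def MCocircuit (M : Matroid α) (C : Set α) : Prop := MCircuit M✶ C

/-- A loop is a dependent singleton. -/
def MLoop (M : Matroid α) (e : α) : Prop := M.Dep {e}

/-- A coloop is a loop of the dual, i.e. an element lying in every base. -/
def MColoop (M : Matroid α) (e : α) : Prop := M✶.Dep {e}

/-- `M` is the vector matroid of the family of vectors `φ` over `GF(2)`:
a set is independent iff it lies in the ground set and the corresponding
vectors are linearly independent. -/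
def IsRep {W : Type*} [AddCommGroup W] [Module (ZMod 2) W] (M : Matroid α) (φ : α → W) : Prop :=
  ∀ I : Set α, M.Indep I ↔ I ⊆ M.E ∧ LinearIndependent (ZMod 2) (I.restrict φ)

open scoped Classical in
/-- The columns of the element splitting matrix `A'_T`: each original column gets an extra
coordinate (the new row), equal to `1` exactly on the columns labelled by `T`, and a new
column `a` which is `1` in the new row and `0` elsewhere. -/
noncomputable def splitRep {W : Type*} [AddCommGroup W] [Module (ZMod 2) W]
    (φ : α → W) (T : Set α) (a : α) : α → W × ZMod 2 :=
  fun x => if x = a then (0, 1) else (φ x, if x ∈ T then 1 else 0)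

/-- `N` is the element splitting matroid `M'_T` of the binary matroid `M` (represented by `φ`)
with respect to `T`, with new element `a`. -/
def IsEleSplit {W : Type*} [AddCommGroup W] [Module (ZMod 2) W]
    (M : Matroid α) (φ : α → W) (T : Set α) (a : α) (N : Matroid α) : Prop :=
  a ∉ M.E ∧ N.E = insert a M.E ∧ IsRep N (splitRep φ T a)

/-- `M` is the contraction `N / a` of the single element `a` from `N`. -/
def ContractElemEq (N : Matroid α) (a : α) (M : Matroid α) : Prop :=
  M.E = N.E \ {a} ∧ ∀ I : Set α,
    M.Indep I ↔ a ∉ I ∧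
      ((N.Indep {a} ∧ N.Indep (insert a I)) ∨ (¬ N.Indep {a} ∧ N.Indep I))

section MrankBasic

variable {M : Matroid α} {X Y I Q : Set α}

lemma mrank_bddAbove (hfin : M.E.Finite) (X : Set α) :
    BddAbove {n | ∃ I, M.Indep I ∧ I ⊆ X ∧ I.ncard = n} := by
  refine ⟨M.E.ncard, ?_⟩
  rintro n ⟨I, hI, -, rfl⟩
  exact ncard_le_ncard hI.subset_ground hfin

lemma le_mrank (hfin : M.E.Finite) (hI : M.Indep I) (hIX : I ⊆ X) : I.ncard ≤ mrank M X :=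
  le_csSup (mrank_bddAbove hfin X) ⟨I, hI, hIX, rfl⟩

lemma exists_mrank_witness (hfin : M.E.Finite) (X : Set α) :
    ∃ I, M.Indep I ∧ I ⊆ X ∧ I.ncard = mrank M X :=
  Nat.sSup_mem (⟨0, ∅, M.empty_indep, empty_subset X, by simp⟩ :
    {n | ∃ I, M.Indep I ∧ I ⊆ X ∧ I.ncard = n}.Nonempty) (mrank_bddAbove hfin X)

lemma mrank_le_ncard (hX : X.Finite) : mrank M X ≤ X.ncard := by
  refine csSup_le ⟨0, ∅, M.empty_indep, empty_subset X, by simp⟩ ?_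
  rintro n ⟨I, hI, hIX, rfl⟩
  exact ncard_le_ncard hIX hX

lemma mrank_mono (hfin : M.E.Finite) (h : X ⊆ Y) : mrank M X ≤ mrank M Y := by
  obtain ⟨I, hI, hIX, hcard⟩ := exists_mrank_witness hfin X
  exact hcard ▸ le_mrank hfin hI (hIX.trans h)

lemma mrank_insert_le (hfin : M.E.Finite) (e : α) : mrank M (insert e X) ≤ mrank M X + 1 := by
  obtain ⟨I, hI, hIX, hcard⟩ := exists_mrank_witness hfin (insert e X)
  have h1 : M.Indep (I \ {e}) := hI.subset diff_subset
  have h2 : I \ {e} ⊆ X := by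
    rintro x ⟨hx1, hx2⟩
    rcases hIX hx1 with h | h
    · exact absurd h hx2
    · exact h
  have h3 : I.ncard ≤ (I \ {e}).ncard + 1 := by
    calc I.ncard ≤ (insert e (I \ {e})).ncard := ncard_le_ncard (by
          intro x hx
          by_cases hxe : x = e
          · exact hxe ▸ mem_insert _ _
          · exact mem_insert_of_mem _ ⟨hx, hxe⟩)
          (((hfin.subset hI.subset_ground).diff).insert e)
      _ ≤ (I \ {e}).ncard + 1 := ncard_insert_le _ _
  exact hcard ▸ h3.trans (Nat.add_le_add_right (le_mrank hfin h1 h2) 1)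

lemma base_ncard (hfin : M.E.Finite) {B : Set α} (hB : M.IsBase B) : B.ncard = mrank M M.E := by
  refine le_antisymm (le_mrank hfin hB.indep hB.subset_ground) ?_
  obtain ⟨I, hI, -, hcard⟩ := exists_mrank_witness hfin M.E
  obtain ⟨B', hB', hIB'⟩ := hI.exists_isBase_superset
  calc mrank M M.E = I.ncard := hcard.symm
    _ ≤ B'.ncard := ncard_le_ncard hIB' (hfin.subset hB'.subset_ground)
    _ = B.ncard := hB'.ncard_eq_ncard_of_isBase hB

lemma exists_base_subset_of_mrank (hfin : M.E.Finite) (hX : X ⊆ M.E)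
    (h : mrank M M.E ≤ mrank M X) : ∃ B, M.IsBase B ∧ B ⊆ X := by
  obtain ⟨I, hI, hIX, hcard⟩ := exists_mrank_witness hfin X
  obtain ⟨B, hB, hIB⟩ := hI.exists_isBase_superset
  have hBI : B = I := by
    refine (eq_of_subset_of_ncard_le hIB ?_ (hfin.subset hB.subset_ground)).symm
    calc B.ncard = mrank M M.E := base_ncard hfin hB
      _ ≤ mrank M X := h
      _ = I.ncard := hcard.symm
  exact ⟨B, hB, hBI ▸ hIX⟩

lemma mrank_lt_of_codep (hfin : M.E.Finite) (hX : X ⊆ M.E) (h : ¬ M✶.Indep (M.E \ X)) :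
    mrank M X < mrank M M.E := by
  by_contra hle
  push_neg at hle
  obtain ⟨B, hB, hBX⟩ := exists_base_subset_of_mrank hfin hX hle
  exact h (Matroid.dual_indep_iff_exists'.2 ⟨diff_subset, B, hB,
    disjoint_of_subset_right hBX (disjoint_sdiff_left)⟩)

lemma exists_minimal_dep (hfin : M.E.Finite) (hX : M.Dep X) :
    ∃ C, Minimal M.Dep C ∧ C ⊆ X := by
  have hfinS : {Y | M.Dep Y ∧ Y ⊆ X}.Finite := by
    have : {Y | M.Dep Y ∧ Y ⊆ X} ⊆ 𝒫 X := fun Y hY => hY.2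
    exact ((hfin.subset hX.subset_ground).finite_subsets).subset this
  obtain ⟨C, hC, hmin⟩ : ∃ C, C ∈ {Y | M.Dep Y ∧ Y ⊆ X} ∧
      ∀ Y ∈ {Y | M.Dep Y ∧ Y ⊆ X}, Y ⊆ C → C = Y := by
    obtain ⟨C, hC⟩ := hfinS.exists_minimal ⟨X, hX, subset_rfl⟩
    exact ⟨C, hC.prop, fun Y hY hYC => (hC.2 hY hYC).antisymm hYC⟩
  refine ⟨C, ⟨hC.1, fun Y hY hYC => ?_⟩, hC.2⟩
  have h2 : C = Y := hmin Y ⟨hY, hYC.trans hC.2⟩ hYC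
  exact h2.le

lemma exists_cocircuit_subset (hfin : M.E.Finite) (hX : X ⊆ M.E)
    (h : mrank M X < mrank M M.E) : ∃ Q, Minimal M✶.Dep Q ∧ Q ⊆ M.E \ X := by
  have hdep : M✶.Dep (M.E \ X) := by
    rw [Matroid.dep_iff]
    refine ⟨fun hi => ?_, diff_subset⟩
    obtain ⟨-, B, hB, hdisj⟩ := Matroid.dual_indep_iff_exists'.1 hi
    have hBX : B ⊆ X := by
      intro x hx
      have hxE : x ∈ M.E := hB.subset_ground hx
      by_contra hxX
      exact (disjoint_right.1 hdisj) hx ⟨hxE, hxX⟩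
    have : mrank M M.E ≤ mrank M X := (base_ncard hfin hB) ▸ le_mrank hfin hB.indep hBX
    exact absurd h (not_lt.2 this)
  obtain ⟨C, hC, hCsub⟩ := exists_minimal_dep (M := M✶) hfin hdep
  exact ⟨C, hC, hCsub⟩

end MrankBasic

section Connectivity

variable {M : Matroid α} {X Q : Set α} {n : ℕ}

lemma indep_of_small (hconn : NConnected M n) (hfin : M.E.Finite)
    (hcard : 2 * n - 2 ≤ M.E.ncard) (hn : 2 ≤ n)
    (hXE : X ⊆ M.E) (hsize : X.ncard ≤ n - 1) : M.Indep X := by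
  by_contra hdep
  have hXdep : M.Dep X := ⟨hdep, hXE⟩
  have hXfin := hfin.subset hXE
  have hk1 : 1 ≤ X.ncard := (ncard_pos hXfin).2 hXdep.nonempty
  have hr : mrank M X + 1 ≤ X.ncard := by
    rcases Nat.lt_or_ge (mrank M X) X.ncard with h | h
    · omega
    · obtain ⟨I, hI, hIX, hcardI⟩ := exists_mrank_witness hfin X
      have : I = X := eq_of_subset_of_ncard_le hIX (by omega) hXfin
      exact absurd (this ▸ hI) hdep
  have hEX : (M.E \ X).ncard = M.E.ncard - X.ncard := ncard_diff hXE hXfin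
  have hmono := mrank_mono hfin (diff_subset : M.E \ X ⊆ M.E)
  exact hconn X.ncard X (M.E \ X) hk1 (by omega)
    ⟨union_diff_cancel hXE, disjoint_sdiff_right, le_rfl, by omega, by omega⟩

lemma cocircuit_ncard_ge (hconn : NConnected M n) (hfin : M.E.Finite)
    (hcard : 2 * n - 2 ≤ M.E.ncard) (hn : 2 ≤ n)
    (hQc : MCocircuit M Q) : n ≤ Q.ncard := by
  by_contra hlt
  push_neg at hlt
  have hQdep : M✶.Dep Q := hQc.prop
  have hQE : Q ⊆ M.E := hQdep.subset_ground
  have hQfin := hfin.subset hQE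
  have hk1 : 1 ≤ Q.ncard := (ncard_pos hQfin).2 hQdep.nonempty
  have hrank : mrank M (M.E \ Q) < mrank M M.E := by
    refine mrank_lt_of_codep hfin diff_subset ?_
    rw [diff_diff_cancel_left hQE]
    exact hQdep.not_indep
  have hEQ : (M.E \ Q).ncard = M.E.ncard - Q.ncard := ncard_diff hQE hQfin
  have hrQ : mrank M Q ≤ Q.ncard := mrank_le_ncard hQfin
  exact hconn Q.ncard Q (M.E \ Q) hk1 (by omega)
    ⟨union_diff_cancel hQE, disjoint_sdiff_right, le_rfl, by omega, by omega⟩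

end Connectivity

section Rep

variable {W : Type*} [AddCommGroup W] [Module (ZMod 2) W] {M : Matroid α} {φ : α → W}
  {X I : Set α}

lemma finrank_span_eq_ncard {s : Set W} (hs : s.Finite)
    (hli : LinearIndependent (ZMod 2) ((↑) : s → W)) :
    Module.finrank (ZMod 2) (Submodule.span (ZMod 2) s) = s.ncard := by
  haveI := hs.fintype
  rw [finrank_span_set_eq_card hli, ncard_eq_toFinset_card']

lemma restrict_li_injOn {s : Set α} (h : LinearIndependent (ZMod 2) (s.restrict φ)) :
    InjOn φ s :=
  injOn_iff_injective.2 h.injective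

lemma restrict_li_iff_image {s : Set α} (hinj : InjOn φ s) :
    LinearIndependent (ZMod 2) (s.restrict φ) ↔
      LinearIndependent (ZMod 2) ((↑) : (φ '' s) → W) :=
  linearIndepOn_iff_image hinj

lemma mrank_eq_finrank (hM : IsRep M φ) (hfin : M.E.Finite) (hX : X ⊆ M.E) :
    mrank M X = Module.finrank (ZMod 2) (Submodule.span (ZMod 2) (φ '' X)) := by
  have hXfin : X.Finite := hfin.subset hX
  haveI : FiniteDimensional (ZMod 2) (Submodule.span (ZMod 2) (φ '' X)) :=
    FiniteDimensional.span_of_finite _ (hXfin.image φ)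
  refine le_antisymm ?_ ?_
  · obtain ⟨I, hI, hIX, hcard⟩ := exists_mrank_witness hfin X
    obtain ⟨-, hli⟩ := (hM I).1 hI
    have hinj := restrict_li_injOn hli
    have hIfin : I.Finite := hXfin.subset hIX
    have h1 : Module.finrank (ZMod 2) (Submodule.span (ZMod 2) (φ '' I)) = I.ncard := by
      rw [finrank_span_eq_ncard (hIfin.image φ) ((restrict_li_iff_image hinj).1 hli),
        ncard_image_of_injOn hinj]
    calc mrank M X = I.ncard := hcard.symm
      _ = _ := h1.symm
      _ ≤ _ := Submodule.finrank_mono (Submodule.span_mono (image_mono hIX))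
  · obtain ⟨b, hbsub, hbspan, hbli⟩ := exists_linearIndependent (ZMod 2) (φ '' X)
    have hbfin : b.Finite := (hXfin.image φ).subset hbsub
    have hsel : ∀ w : b, ∃ x, x ∈ X ∧ φ x = (w : W) := by
      rintro ⟨w, hw⟩
      obtain ⟨x, hx, rfl⟩ := hbsub hw
      exact ⟨x, hx, rfl⟩
    choose h hhX hhφ using hsel
    set I : Set α := range h with hI
    have hIX : I ⊆ X := by rintro x ⟨w, rfl⟩; exact hhX w
    have hφI : φ '' I = b := by
      ext w
      constructor
      · rintro ⟨x, ⟨w', rfl⟩, rfl⟩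
        rw [hhφ w']; exact w'.2
      · intro hw
        exact ⟨h ⟨w, hw⟩, ⟨⟨w, hw⟩, rfl⟩, hhφ ⟨w, hw⟩⟩
    have hinj : InjOn φ I := by
      rintro x ⟨w, rfl⟩ y ⟨w', rfl⟩ hxy
      rw [hhφ w, hhφ w'] at hxy
      rw [Subtype.ext hxy]
    have hli : LinearIndependent (ZMod 2) (I.restrict φ) := by
      rw [restrict_li_iff_image hinj, hφI] at *
      exact hbli
    have hIndep : M.Indep I := (hM I).2 ⟨hIX.trans hX, hli⟩
    calc Module.finrank (ZMod 2) (Submodule.span (ZMod 2) (φ '' X))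
        = Module.finrank (ZMod 2) (Submodule.span (ZMod 2) b) := by rw [hbspan]
      _ = b.ncard := finrank_span_eq_ncard hbfin hbli
      _ = I.ncard := by rw [← hφI, ncard_image_of_injOn hinj]
      _ ≤ mrank M X := le_mrank hfin hIndep hIX

end Rep

section Split

variable {W : Type*} [AddCommGroup W] [Module (ZMod 2) W] {M N : Matroid α} {φ : α → W}
  {T X I : Set α} {a : α}

open scoped Classical in
lemma splitRep_apply (ha : a ∉ M.E) {x : α} (hx : x ∈ M.E) :
    splitRep φ T a x = (φ x, if x ∈ T then 1 else 0) := by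
  have : x ≠ a := fun h => ha (h ▸ hx)
  simp [splitRep, this]

lemma splitRep_fst (ha : a ∉ M.E) {x : α} (hx : x ∈ M.E) :
    (splitRep φ T a x).1 = φ x := by rw [splitRep_apply ha hx]

lemma splitRep_a : splitRep φ T a a = (0, 1) := by simp [splitRep]

lemma finrank_le_map_fst_add_one (p : Submodule (ZMod 2) (W × ZMod 2))
    [FiniteDimensional (ZMod 2) p] :
    Module.finrank (ZMod 2) p ≤
      Module.finrank (ZMod 2) (p.map (LinearMap.fst (ZMod 2) W (ZMod 2))) + 1 := by
  set F := (LinearMap.fst (ZMod 2) W (ZMod 2)).comp p.subtype with hF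
  have hrange : LinearMap.range F = p.map (LinearMap.fst (ZMod 2) W (ZMod 2)) := by
    rw [hF, LinearMap.range_comp, Submodule.range_subtype]
  have hker : Module.finrank (ZMod 2) (LinearMap.ker F) ≤ 1 := by
    have hinj : Function.Injective
        ((LinearMap.snd (ZMod 2) W (ZMod 2)).comp (p.subtype.comp (LinearMap.ker F).subtype)) := by
      rintro ⟨⟨v, hv⟩, hv2⟩ ⟨⟨w, hw⟩, hw2⟩ hvw
      have h1 : v.1 = 0 := hv2
      have h2 : w.1 = 0 := hw2
      have h3 : v.2 = w.2 := hvw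
      ext <;> simp_all [Prod.ext_iff]
    calc Module.finrank (ZMod 2) (LinearMap.ker F)
        ≤ Module.finrank (ZMod 2) (ZMod 2) := LinearMap.finrank_le_finrank_of_injective hinj
      _ = 1 := Module.finrank_self _
  have := LinearMap.finrank_range_add_finrank_ker F
  rw [hrange] at this
  omega

lemma eq_zero_of_fst_eq_zero {p : Submodule (ZMod 2) (W × ZMod 2)}
    [FiniteDimensional (ZMod 2) p]
    (h : Module.finrank (ZMod 2) p ≤
      Module.finrank (ZMod 2) (p.map (LinearMap.fst (ZMod 2) W (ZMod 2))))
    {v : W × ZMod 2} (hv : v ∈ p) (hv1 : v.1 = 0) : v = 0 := by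
  set F := (LinearMap.fst (ZMod 2) W (ZMod 2)).comp p.subtype with hF
  have hrange : LinearMap.range F = p.map (LinearMap.fst (ZMod 2) W (ZMod 2)) := by
    rw [hF, LinearMap.range_comp, Submodule.range_subtype]
  have hrn := LinearMap.finrank_range_add_finrank_ker F
  rw [hrange] at hrn
  have hker : LinearMap.ker F = ⊥ := by
    have : Module.finrank (ZMod 2) (LinearMap.ker F) = 0 := by omega
    exact Submodule.finrank_eq_zero.1 this
  have : (⟨v, hv⟩ : p) ∈ LinearMap.ker F := by
    simp only [LinearMap.mem_ker, hF, LinearMap.comp_apply, Submodule.subtype_apply]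
    exact hv1
  rw [hker, Submodule.mem_bot] at this
  exact congrArg Subtype.val this

end Split

section Transfer

variable {W : Type*} [AddCommGroup W] [Module (ZMod 2) W] {M N : Matroid α} {φ : α → W}
  {T X I : Set α} {a : α}

lemma split_indep_of_indep (hM : IsRep M φ) (hsp : IsEleSplit M φ T a N)
    (hI : M.Indep I) : N.Indep I := by
  obtain ⟨ha, hNE, hNrep⟩ := hsp
  have hli := ((hM I).1 hI).2
  have hIE : I ⊆ M.E := hI.subset_ground
  have hliN : LinearIndependent (ZMod 2) (I.restrict (splitRep φ T a)) := by
    apply LinearIndependent.of_comp (LinearMap.fst (ZMod 2) W (ZMod 2))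
    have heq : (LinearMap.fst (ZMod 2) W (ZMod 2)) ∘ (I.restrict (splitRep φ T a))
        = I.restrict φ := by
      funext x
      exact splitRep_fst ha (hIE x.2)
    rw [heq]; exact hli
  exact (hNrep I).2 ⟨hNE ▸ (hIE.trans (subset_insert a M.E)), hliN⟩

lemma mrank_le_split (hM : IsRep M φ) (hsp : IsEleSplit M φ T a N)
    (hfin : M.E.Finite) (hX : X ⊆ M.E) : mrank M X ≤ mrank N X := by
  obtain ⟨I, hI, hIX, hcard⟩ := exists_mrank_witness hfin X
  have hNfin : N.E.Finite := hsp.2.1 ▸ hfin.insert a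
  exact hcard ▸ le_mrank hNfin (split_indep_of_indep hM hsp hI) hIX

lemma split_indep_insert (hM : IsRep M φ) (hsp : IsEleSplit M φ T a N)
    (hfin : M.E.Finite) (hI : M.Indep I) : N.Indep (insert a I) := by
  obtain ⟨ha, hNE, hNrep⟩ := id hsp
  set ψ := splitRep φ T a with hψ
  have hli := ((hM I).1 hI).2
  have hIE : I ⊆ M.E := hI.subset_ground
  have hIfin : I.Finite := hfin.subset hIE
  have haI : a ∉ I := fun h => ha (hIE h)
  have hliN : LinearIndependent (ZMod 2) (I.restrict ψ) := by
    have := split_indep_of_indep hM hsp hI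
    exact ((hNrep I).1 this).2
  have hinjψ : InjOn ψ I := restrict_li_injOn hliN
  have hinjφ : InjOn φ I := restrict_li_injOn hli
  have hfst_image : ⇑(LinearMap.fst (ZMod 2) W (ZMod 2)) '' (ψ '' I) = φ '' I := by
    rw [image_image]
    exact image_congr (fun x hx => splitRep_fst ha (hIE hx))
  have hnotmem : ψ a ∉ Submodule.span (ZMod 2) (ψ '' I) := by
    intro hmem
    set p := Submodule.span (ZMod 2) (ψ '' I) with hp
    haveI : FiniteDimensional (ZMod 2) p :=
      FiniteDimensional.span_of_finite _ (hIfin.image ψ)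
    have hmap : p.map (LinearMap.fst (ZMod 2) W (ZMod 2))
        = Submodule.span (ZMod 2) (φ '' I) := by
      rw [hp, Submodule.map_span, hfst_image]
    have hfr1 : Module.finrank (ZMod 2) p = I.ncard := by
      rw [hp, finrank_span_eq_ncard (hIfin.image ψ) ((restrict_li_iff_image hinjψ).1 hliN),
        ncard_image_of_injOn hinjψ]
    have hfr2 : Module.finrank (ZMod 2)
        (p.map (LinearMap.fst (ZMod 2) W (ZMod 2))) = I.ncard := by
      rw [hmap, finrank_span_eq_ncard (hIfin.image φ) ((restrict_li_iff_image hinjφ).1 hli),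
        ncard_image_of_injOn hinjφ]
    have := eq_zero_of_fst_eq_zero (le_of_eq (hfr1.trans hfr2.symm)) hmem
      (by rw [hψ, splitRep_a])
    rw [hψ, splitRep_a] at this
    exact one_ne_zero (congrArg Prod.snd this)
  have hliIns : LinearIndependent (ZMod 2) ((insert a I).restrict ψ) :=
    (linearIndepOn_insert haI).2 ⟨hliN, hnotmem⟩
  exact (hNrep _).2 ⟨hNE ▸ insert_subset_insert hIE, hliIns⟩

lemma split_mrank_insert (hM : IsRep M φ) (hsp : IsEleSplit M φ T a N)
    (hfin : M.E.Finite) (hX : X ⊆ M.E) : mrank M X + 1 ≤ mrank N (insert a X) := by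
  obtain ⟨I, hI, hIX, hcard⟩ := exists_mrank_witness hfin X
  have haI : a ∉ I := fun h => hsp.1 (hI.subset_ground h)
  have hNfin : N.E.Finite := hsp.2.1 ▸ hfin.insert a
  have hIfin : I.Finite := hfin.subset hI.subset_ground
  have h1 := le_mrank hNfin (split_indep_insert hM hsp hfin hI)
    (insert_subset_insert hIX)
  rwa [ncard_insert_of_notMem haI hIfin, hcard] at h1

lemma split_mrank_ground (hM : IsRep M φ) (hsp : IsEleSplit M φ T a N)
    (hfin : M.E.Finite) : mrank N N.E = mrank M M.E + 1 := by
  obtain ⟨ha, hNE, hNrep⟩ := hsp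
  set ψ := splitRep φ T a with hψ
  have hNfin : N.E.Finite := hNE ▸ hfin.insert a
  refine le_antisymm ?_ (hNE ▸ split_mrank_insert hM ⟨ha, hNE, hNrep⟩ hfin subset_rfl)
  set p := Submodule.span (ZMod 2) (ψ '' N.E) with hp
  haveI : FiniteDimensional (ZMod 2) p :=
    FiniteDimensional.span_of_finite _ (hNfin.image ψ)
  have hmap : p.map (LinearMap.fst (ZMod 2) W (ZMod 2))
      = Submodule.span (ZMod 2) (φ '' M.E) := by
    rw [hp, Submodule.map_span, hNE, image_insert_eq, image_insert_eq]
    have h0 : (LinearMap.fst (ZMod 2) W (ZMod 2)) (ψ a) = 0 := by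
      rw [hψ, splitRep_a]; rfl
    have himg : ⇑(LinearMap.fst (ZMod 2) W (ZMod 2)) '' (ψ '' M.E) = φ '' M.E := by
      rw [image_image]
      exact image_congr (fun x hx => splitRep_fst ha hx)
    rw [h0, himg, Submodule.span_insert_zero]
  calc mrank N N.E = Module.finrank (ZMod 2) p := mrank_eq_finrank hNrep hNfin subset_rfl
    _ ≤ Module.finrank (ZMod 2) (p.map (LinearMap.fst (ZMod 2) W (ZMod 2))) + 1 :=
        finrank_le_map_fst_add_one p
    _ = mrank M M.E + 1 := by rw [hmap, ← mrank_eq_finrank hM hfin subset_rfl]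

end Transfer

section Functional

variable {W : Type*} [AddCommGroup W] [Module (ZMod 2) W] {M : Matroid α} {φ : α → W}
  {Q : Set α} {n : ℕ}

lemma cocircuit_exists_functional (hM : IsRep M φ) (hfin : M.E.Finite)
    (hQ : MCocircuit M Q) :
    ∃ h : W →ₗ[ZMod 2] ZMod 2, ∀ x ∈ M.E, (h (φ x) ≠ 0 ↔ x ∈ Q) := by
  have hQdep : M✶.Dep Q := hQ.prop
  have hQE : Q ⊆ M.E := hQdep.subset_ground
  obtain ⟨e₀, he₀⟩ := hQdep.nonempty
  have h2 : mrank M (M.E \ Q) < mrank M M.E := by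
    refine mrank_lt_of_codep hfin diff_subset ?_
    rw [diff_diff_cancel_left hQE]
    exact hQdep.not_indep
  have h3 : ∀ e ∈ Q, mrank M (insert e (M.E \ Q)) = mrank M M.E := by
    intro e he
    have hindep : M✶.Indep (Q \ {e}) := by
      by_contra hdep
      have : M✶.Dep (Q \ {e}) := Matroid.dep_iff.2 ⟨hdep, diff_subset.trans hQE⟩
      have := hQ.2 this diff_subset
      exact (this he).2 rfl
    obtain ⟨-, B, hB, hdisj⟩ := Matroid.dual_indep_iff_exists'.1 hindep
    have hBsub : B ⊆ insert e (M.E \ Q) := by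
      intro x hx
      have hxE : x ∈ M.E := hB.subset_ground hx
      by_cases hxQ : x ∈ Q
      · by_cases hxe : x = e
        · exact hxe ▸ mem_insert _ _
        · exact absurd (⟨hxQ, hxe⟩ : x ∈ Q \ {e}) (disjoint_right.1 hdisj hx)
      · exact mem_insert_of_mem _ ⟨hxE, hxQ⟩
    refine le_antisymm (mrank_mono hfin (insert_subset (hQE he) diff_subset)) ?_
    rw [← base_ncard hfin hB]
    exact le_mrank hfin hB.indep hBsub
  set V0 := Submodule.span (ZMod 2) (φ '' (M.E \ Q)) with hV0
  set V := Submodule.span (ZMod 2) (φ '' M.E) with hV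
  haveI : FiniteDimensional (ZMod 2) V :=
    FiniteDimensional.span_of_finite _ (hfin.image φ)
  haveI : FiniteDimensional (ZMod 2) V0 :=
    FiniteDimensional.span_of_finite _ ((hfin.diff).image φ)
  have hfr0 : Module.finrank (ZMod 2) V0 = mrank M (M.E \ Q) :=
    (mrank_eq_finrank hM hfin diff_subset).symm
  have hfrV : Module.finrank (ZMod 2) V = mrank M M.E :=
    (mrank_eq_finrank hM hfin subset_rfl).symm
  -- the functional
  have he₀mem : φ e₀ ∉ V0 := by
    intro hmem
    have hsp : Submodule.span (ZMod 2) (φ '' (insert e₀ (M.E \ Q))) = V0 := by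
      rw [image_insert_eq, Submodule.span_insert_eq_span hmem]
    have := mrank_eq_finrank (X := insert e₀ (M.E \ Q)) hM hfin
      (insert_subset (hQE he₀) diff_subset)
    rw [hsp, hfr0, h3 e₀ he₀] at this
    omega
  set π := V0.mkQ with hπ
  have hπe₀ : π (φ e₀) ≠ 0 := by
    rw [hπ, Submodule.mkQ_apply, ne_eq, Submodule.Quotient.mk_eq_zero]
    exact he₀mem
  set vbar := π (φ e₀) with hvbar
  obtain ⟨g', hg'⟩ := LinearMap.exists_extend
    ((LinearEquiv.toSpanNonzeroSingleton (ZMod 2) _ vbar hπe₀).symm.toLinearMap)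
  set h := g'.comp π with hh
  have hhe₀ : h (φ e₀) ≠ 0 := by
    intro h0
    have : g' vbar = 0 := h0
    have h1 : (Submodule.span (ZMod 2) {vbar}).subtype ⟨vbar, Submodule.mem_span_singleton_self _⟩ = vbar := rfl
    have h2' : g' ((Submodule.span (ZMod 2) {vbar}).subtype ⟨vbar, Submodule.mem_span_singleton_self _⟩) = 0 := by
      rw [h1]; exact this
    rw [← LinearMap.comp_apply, hg'] at h2'
    have := (LinearEquiv.toSpanNonzeroSingleton (ZMod 2) _ vbar hπe₀).symm.injective
      (a₁ := ⟨vbar, Submodule.mem_span_singleton_self _⟩) (a₂ := 0) (by simpa using h2')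
    have hv0 : vbar = 0 := by
      have := congrArg Subtype.val this
      simpa using this
    exact hπe₀ hv0
  have hzero : ∀ x ∈ M.E \ Q, h (φ x) = 0 := by
    intro x hx
    have : φ x ∈ V0 := Submodule.subset_span (mem_image_of_mem φ hx)
    have : π (φ x) = 0 := by
      rw [hπ, Submodule.mkQ_apply, Submodule.Quotient.mk_eq_zero]
      exact this
    rw [hh, LinearMap.comp_apply, this, map_zero]
  refine ⟨h, fun x hxE => ⟨fun hne => ?_, fun hxQ => ?_⟩⟩
  · by_contra hxQ
    exact hne (hzero x ⟨hxE, hxQ⟩)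
  · intro h0
    have hle : Submodule.span (ZMod 2) (φ '' (insert x (M.E \ Q))) ≤ LinearMap.ker h := by
      rw [Submodule.span_le]
      rintro w ⟨y, hy, rfl⟩
      rcases hy with rfl | hy
      · exact h0
      · exact hzero y hy
    have hleV : Submodule.span (ZMod 2) (φ '' (insert x (M.E \ Q))) ≤ V :=
      Submodule.span_mono (image_mono (insert_subset hxE diff_subset))
    have hlt : Submodule.span (ZMod 2) (φ '' (insert x (M.E \ Q))) < V := by
      refine lt_of_le_of_ne hleV (fun heq => ?_)
      have : φ e₀ ∈ Submodule.span (ZMod 2) (φ '' (insert x (M.E \ Q))) := by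
        rw [heq]; exact Submodule.subset_span (mem_image_of_mem φ (hQE he₀))
      exact hhe₀ (hle this)
    have hfrlt := Submodule.finrank_lt_finrank_of_lt hlt
    have := mrank_eq_finrank (X := insert x (M.E \ Q)) hM hfin
      (insert_subset hxE diff_subset)
    rw [h3 x hxQ] at this
    omega

end Functional

section Support

variable {W : Type*} [AddCommGroup W] [Module (ZMod 2) W] {M : Matroid α} {φ : α → W}
  {n : ℕ}

lemma exists_cocircuit_in_support (hM : IsRep M φ) (hfin : M.E.Finite)
    (g : W →ₗ[ZMod 2] ZMod 2) (hne : {x | x ∈ M.E ∧ g (φ x) ≠ 0}.Nonempty) :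
    ∃ Q, MCocircuit M Q ∧ Q ⊆ {x | x ∈ M.E ∧ g (φ x) ≠ 0} := by
  set X₀ := {x | x ∈ M.E ∧ g (φ x) = 0} with hX₀
  have hX₀E : X₀ ⊆ M.E := fun x hx => hx.1
  obtain ⟨x₀, hx₀E, hx₀⟩ := hne
  have hlt : mrank M X₀ < mrank M M.E := by
    haveI : FiniteDimensional (ZMod 2) (Submodule.span (ZMod 2) (φ '' M.E)) :=
      FiniteDimensional.span_of_finite _ (hfin.image φ)
    rw [mrank_eq_finrank hM hfin hX₀E, mrank_eq_finrank hM hfin subset_rfl]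
    refine Submodule.finrank_lt_finrank_of_lt (lt_of_le_of_ne
      (Submodule.span_mono (image_mono hX₀E)) (fun heq => ?_))
    have hker : Submodule.span (ZMod 2) (φ '' X₀) ≤ LinearMap.ker g := by
      rw [Submodule.span_le]
      rintro w ⟨y, hy, rfl⟩
      exact hy.2
    have : φ x₀ ∈ Submodule.span (ZMod 2) (φ '' X₀) := by
      rw [heq]; exact Submodule.subset_span (mem_image_of_mem φ hx₀E)
    exact hx₀ (hker this)
  obtain ⟨Q, hQ, hQsub⟩ := exists_cocircuit_subset hfin hX₀E hlt
  refine ⟨Q, hQ, fun x hx => ?_⟩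
  obtain ⟨hxE, hxX₀⟩ := hQsub hx
  refine ⟨hxE, fun h0 => hxX₀ ⟨hxE, h0⟩⟩

lemma support_eq_cocircuit (hM : IsRep M φ) (hfin : M.E.Finite)
    (hconn : NConnected M n) (hcard : 2 * n - 2 ≤ M.E.ncard) (hn : 2 ≤ n)
    (g : W →ₗ[ZMod 2] ZMod 2) (hne : {x | x ∈ M.E ∧ g (φ x) ≠ 0}.Nonempty)
    (hsize : {x | x ∈ M.E ∧ g (φ x) ≠ 0}.ncard < 2 * n) :
    MCocircuit M {x | x ∈ M.E ∧ g (φ x) ≠ 0} := by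
  set D := {x | x ∈ M.E ∧ g (φ x) ≠ 0} with hD
  have hDE : D ⊆ M.E := fun x hx => hx.1
  have hDfin : D.Finite := hfin.subset hDE
  obtain ⟨Q, hQ, hQsub⟩ := exists_cocircuit_in_support hM hfin g hne
  obtain ⟨h1, hh1⟩ := cocircuit_exists_functional hM hfin hQ
  have hQE : Q ⊆ M.E := (hQ.prop).subset_ground
  have hD' : {x | x ∈ M.E ∧ (g + h1) (φ x) ≠ 0} = D \ Q := by
    ext x
    simp only [hD, mem_setOf_eq, mem_diff, LinearMap.add_apply]
    constructor
    · rintro ⟨hxE, hx⟩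
      have hxQ : x ∉ Q := by
        intro hxQ
        have h1x : h1 (φ x) = 1 := by
          have := (hh1 x hxE).2 hxQ
          revert this; generalize h1 (φ x) = c; revert c; decide
        have hgx : g (φ x) = 1 := by
          have := (hQsub hxQ).2
          revert this; generalize g (φ x) = c; revert c; decide
        rw [h1x, hgx] at hx
        exact hx (by decide)
      have hgx : g (φ x) ≠ 0 := by
        intro h0
        have h1x : h1 (φ x) = 0 := by
          by_contra hh
          exact hxQ ((hh1 x hxE).1 hh)
        rw [h0, h1x] at hx
        exact hx (by decide)
      exact ⟨⟨hxE, hgx⟩, hxQ⟩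
    · rintro ⟨⟨hxE, hgx⟩, hxQ⟩
      refine ⟨hxE, ?_⟩
      have h1x : h1 (φ x) = 0 := by
        by_contra hh
        exact hxQ ((hh1 x hxE).1 hh)
      rw [h1x, add_zero]
      exact hgx
  have hempty : D \ Q = ∅ := by
    by_contra hne'
    rw [← ne_eq, ← nonempty_iff_ne_empty] at hne'
    obtain ⟨Q₂, hQ₂, hQ₂sub⟩ := exists_cocircuit_in_support hM hfin (g + h1) (hD' ▸ hne')
    rw [hD'] at hQ₂sub
    have hdisj : Disjoint Q Q₂ := by
      rw [disjoint_left]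
      intro x hxQ hxQ₂
      exact (hQ₂sub hxQ₂).2 hxQ
    have hQfin : Q.Finite := hfin.subset hQE
    have hQ₂fin : Q₂.Finite := hfin.subset (hQ₂.prop).subset_ground
    have hcup : (Q ∪ Q₂).ncard = Q.ncard + Q₂.ncard := ncard_union_eq hdisj hQfin hQ₂fin
    have hsubD : Q ∪ Q₂ ⊆ D := union_subset hQsub (fun x hx => (hQ₂sub hx).1)
    have hle := ncard_le_ncard hsubD hDfin
    have hn1 := cocircuit_ncard_ge hconn hfin hcard hn hQ
    have hn2 := cocircuit_ncard_ge hconn hfin hcard hn hQ₂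
    omega
  have hDQ : D = Q := by
    rw [diff_eq_empty] at hempty
    exact hempty.antisymm hQsub
  exact hDQ ▸ hQ

end Support

section FunctionalOn

variable {W : Type*} [AddCommGroup W] [Module (ZMod 2) W] {M N : Matroid α} {φ : α → W}
  {T : Set α} {a : α}

lemma exists_functional_on (hM : IsRep M φ) (hsp : IsEleSplit M φ T a N)
    (hfin : M.E.Finite) {B : Set α} (hBE : B ⊆ M.E) (hrB : mrank N B ≤ mrank M B) :
    ∃ g : W →ₗ[ZMod 2] ZMod 2, ∀ x ∈ B, (g (φ x) ≠ 0 ↔ x ∈ T) := by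
  classical
  obtain ⟨ha, hNE, hNrep⟩ := id hsp
  set ψ := splitRep φ T a with hψ
  have hNfin : N.E.Finite := hNE ▸ hfin.insert a
  have hBfin : B.Finite := hfin.subset hBE
  have hBNE : B ⊆ N.E := hNE ▸ hBE.trans (subset_insert a M.E)
  set p := Submodule.span (ZMod 2) (ψ '' B) with hp
  set q := Submodule.span (ZMod 2) (φ '' B) with hq
  haveI : FiniteDimensional (ZMod 2) p := FiniteDimensional.span_of_finite _ (hBfin.image ψ)
  haveI : FiniteDimensional (ZMod 2) q := FiniteDimensional.span_of_finite _ (hBfin.image φ)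
  have hmap : p.map (LinearMap.fst (ZMod 2) W (ZMod 2)) = q := by
    rw [hp, Submodule.map_span, hq]
    congr 1
    rw [image_image]
    exact image_congr (fun x hx => splitRep_fst ha (hBE hx))
  have hfrp : Module.finrank (ZMod 2) p = mrank N B := (mrank_eq_finrank hNrep hNfin hBNE).symm
  have hfrq : Module.finrank (ZMod 2) q = mrank M B := (mrank_eq_finrank hM hfin hBE).symm
  have hfr_le : Module.finrank (ZMod 2) p ≤
      Module.finrank (ZMod 2) (p.map (LinearMap.fst (ZMod 2) W (ZMod 2))) := by
    rw [hmap]; omega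
  -- the bijection p ≃ q given by fst
  have hmem : ∀ v : p, (LinearMap.fst (ZMod 2) W (ZMod 2)) v.val ∈ q := by
    intro v
    rw [← hmap]
    exact Submodule.mem_map_of_mem v.2
  set f' : p →ₗ[ZMod 2] q :=
    LinearMap.codRestrict q ((LinearMap.fst (ZMod 2) W (ZMod 2)).comp p.subtype) hmem with hf'
  have hinj : Function.Injective f' := by
    intro u v huv
    have h1 : (u.val - v.val).1 = 0 := by
      have := congrArg Subtype.val huv
      have h2 : u.val.1 = v.val.1 := this
      simp [Prod.fst_sub, h2]
    have := eq_zero_of_fst_eq_zero hfr_le (p.sub_mem u.2 v.2) h1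
    exact Subtype.ext (by rwa [sub_eq_zero] at this)
  have hsurj : Function.Surjective f' := by
    rintro ⟨w, hw⟩
    rw [← hmap] at hw
    obtain ⟨v, hv, hvw⟩ := hw
    exact ⟨⟨v, hv⟩, Subtype.ext hvw⟩
  set e := LinearEquiv.ofBijective f' ⟨hinj, hsurj⟩ with he
  set g₀ : q →ₗ[ZMod 2] ZMod 2 :=
    ((LinearMap.snd (ZMod 2) W (ZMod 2)).comp p.subtype).comp e.symm.toLinearMap with hg₀
  obtain ⟨g, hg⟩ := LinearMap.exists_extend g₀
  refine ⟨g, fun x hx => ?_⟩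
  have hφx : φ x ∈ q := Submodule.subset_span (mem_image_of_mem φ hx)
  have hψx : ψ x ∈ p := Submodule.subset_span (mem_image_of_mem ψ hx)
  have hex : e ⟨ψ x, hψx⟩ = ⟨φ x, hφx⟩ := by
    apply Subtype.ext
    show (LinearMap.fst (ZMod 2) W (ZMod 2)) (ψ x) = φ x
    exact splitRep_fst ha (hBE hx)
  have hsymm : e.symm ⟨φ x, hφx⟩ = ⟨ψ x, hψx⟩ := by
    rw [← hex, LinearEquiv.symm_apply_apply]
  have hgval : g (φ x) = (ψ x).2 := by
    have h1 : g (q.subtype ⟨φ x, hφx⟩) = g₀ ⟨φ x, hφx⟩ := by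
      rw [← LinearMap.comp_apply, hg]
    have h2 : g₀ ⟨φ x, hφx⟩ = (ψ x).2 := by
      rw [hg₀]
      simp only [LinearMap.comp_apply, LinearEquiv.coe_coe]
      rw [hsymm]
      rfl
    exact h1.trans h2
  rw [hgval, hψ, splitRep_apply ha (hBE hx)]
  by_cases hxT : x ∈ T <;> simp [hxT]

end FunctionalOn

section Main

variable {W : Type*} [AddCommGroup W] [Module (ZMod 2) W]

lemma main_case {α W : Type*} [AddCommGroup W] [Module (ZMod 2) W]
    {n : ℕ} (hn2 : 2 ≤ n) (hn4 : n ≤ 4) {M N : Matroid α} {φ : α → W} (hM : IsRep M φ)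
    (hfin : M.E.Finite) (hcard : 2 * n - 2 ≤ M.E.ncard) (hconn : NConnected M n)
    {T : Set α} (hT : T ⊆ M.E) (hTcard : T.ncard = n - 1)
    {a : α} (hsp : IsEleSplit M φ T a N)
    (hQcond : ∀ Q : Set α, MCocircuit M Q → T ⊆ Q → 2 * n - 2 ≤ Q.ncard)
    {k : ℕ} {A B : Set α} (hk1 : 1 ≤ k) (hkn : k < n) (haA : a ∈ A)
    (hsep : IsKSeparation N k A B) : False := by
  obtain ⟨hunion, hdisj, hAk, hBk, hrank⟩ := hsep
  have ha : a ∉ M.E := hsp.1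
  have hNE : N.E = insert a M.E := hsp.2.1
  have hNfin : N.E.Finite := hNE ▸ hfin.insert a
  have haB : a ∉ B := fun h => (disjoint_left.1 hdisj haA) h
  have hBE : B ⊆ M.E := by
    intro x hx
    have : x ∈ N.E := hunion ▸ mem_union_right A hx
    rw [hNE] at this
    rcases this with rfl | h
    · exact absurd hx haB
    · exact h
  set A' := A \ {a} with hA'
  have hA'E : A' ⊆ M.E := by
    rintro x ⟨hxA, hxa⟩
    have : x ∈ N.E := hunion ▸ mem_union_left B hxA
    rw [hNE] at this
    rcases this with rfl | h
    · exact absurd rfl hxa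
    · exact h
  have hA'B : A' ∪ B = M.E := by
    have h1 : (A ∪ B) \ {a} = M.E := by
      rw [hunion, hNE, insert_diff_self_of_notMem]
      intro h; exact ha h
    rw [← h1, union_diff_distrib, hA', diff_singleton_eq_self haB]
  have hdisj' : Disjoint A' B := hdisj.mono_left diff_subset
  have hAfin : A.Finite := hNfin.subset (hunion ▸ subset_union_left)
  have hA'fin : A'.Finite := hAfin.diff
  have hBfin : B.Finite := hfin.subset hBE
  have hAcard : A'.ncard + 1 = A.ncard := ncard_diff_singleton_add_one haA hAfin
  have hinsA : insert a A' = A := insert_diff_singleton.trans (insert_eq_self.2 haA)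
  have t2 : mrank M B ≤ mrank N B := mrank_le_split hM hsp hfin hBE
  have t3 : mrank N N.E = mrank M M.E + 1 := split_mrank_ground hM hsp hfin
  by_cases hA'k : k ≤ A'.ncard
  · -- Case 1 : (A', B) is a k-separation of M
    refine hconn k A' B hk1 hkn ⟨hA'B, hdisj', hA'k, hBk, ?_⟩
    have t1 : mrank M A' + 1 ≤ mrank N A := by
      have := split_mrank_insert hM hsp hfin hA'E
      rwa [hinsA] at this
    omega
  · -- Case 2 : A = A' ∪ {a} with |A'| = k - 1
    have hA'card : A'.ncard = k - 1 := by omega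
    have hA'indep : M.Indep A' := indep_of_small hconn hfin hcard hn2 hA'E (by omega)
    have hrankA' : mrank M A' = k - 1 := by
      refine le_antisymm (hA'card ▸ mrank_le_ncard hA'fin) ?_
      exact hA'card ▸ le_mrank hfin hA'indep subset_rfl
    have hrankA : k ≤ mrank N A := by
      have := split_mrank_insert hM hsp hfin hA'E
      rw [hinsA, hrankA'] at this
      omega
    have hrankB : mrank N B < mrank N N.E := by
      rcases lt_or_ge (mrank N B) (mrank N N.E) with h | h
      · exact h
      · exfalso
        have := mrank_mono hNfin (hunion ▸ (subset_union_right : B ⊆ A ∪ B))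
        omega
    have hMBle : mrank M B ≤ mrank M M.E := mrank_mono hfin hBE
    have hEdiffB : M.E \ B = A' := by
      rw [← hA'B, union_diff_right, hdisj'.sdiff_eq_left]
    rcases lt_or_ge (mrank M B) (mrank M M.E) with hMB | hMB
    · obtain ⟨Q, hQc, hQsub⟩ := exists_cocircuit_subset hfin hBE hMB
      rw [hEdiffB] at hQsub
      have h1 := cocircuit_ncard_ge hconn hfin hcard hn2 hQc
      have h2 := ncard_le_ncard hQsub hA'fin
      omega
    · have hrB : mrank N B ≤ mrank M B := by omega
      obtain ⟨g, hg⟩ := exists_functional_on hM hsp hfin hBE hrB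
      set D := {x | x ∈ M.E ∧ g (φ x) ≠ 0} with hD
      have hTfin : T.Finite := hfin.subset hT
      have hTBne : (T ∩ B).Nonempty := by
        rw [nonempty_iff_ne_empty]
        intro hemp
        rw [eq_empty_iff_forall_notMem] at hemp
        have hTA' : T ⊆ A' := by
          intro t ht
          rcases (hA'B ▸ hT ht : t ∈ A' ∪ B) with h | h
          · exact h
          · exact absurd (mem_inter ht h) (hemp t)
        have := ncard_le_ncard hTA' hA'fin
        omega
      have hDB : ∀ x ∈ B, (x ∈ D ↔ x ∈ T) := by
        intro x hx
        simp only [hD, mem_setOf_eq]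
        constructor
        · rintro ⟨-, hne⟩; exact (hg x hx).1 hne
        · intro hxT; exact ⟨hBE hx, (hg x hx).2 hxT⟩
      have hne : D.Nonempty := by
        obtain ⟨t, htT, htB⟩ := hTBne
        exact ⟨t, (hDB t htB).2 htT⟩
      have hDsub : D ⊆ (T ∩ B) ∪ A' := by
        intro x hx
        rcases (hA'B ▸ hx.1 : x ∈ A' ∪ B) with h | h
        · exact mem_union_right _ h
        · exact mem_union_left _ (mem_inter ((hDB x h).1 hx) h)
      have hTBcard : (T ∩ B).ncard ≤ n - 1 :=
        hTcard ▸ ncard_le_ncard inter_subset_left hTfin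
      have hDfin : D.Finite := hfin.subset (fun x hx => hx.1)
      have hTBfin : (T ∩ B).Finite := hTfin.subset inter_subset_left
      have hDcard : D.ncard ≤ (T ∩ B).ncard + A'.ncard :=
        (ncard_le_ncard hDsub (hTBfin.union hA'fin)).trans (ncard_union_le _ _)
      have hsize : D.ncard < 2 * n := by omega
      have hDQ : MCocircuit M D := support_eq_cocircuit hM hfin hconn hcard hn2 g hne hsize
      have hQn := cocircuit_ncard_ge hconn hfin hcard hn2 hDQ
      by_cases hTD : T ⊆ D
      · have := hQcond D hDQ hTD
        omega
      · obtain ⟨t₀, ht₀T, ht₀D⟩ := not_subset.1 hTD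
        have ht₀A' : t₀ ∈ A' := by
          rcases (hA'B ▸ hT ht₀T : t₀ ∈ A' ∪ B) with h | h
          · exact h
          · exact absurd ((hDB t₀ h).2 ht₀T) ht₀D
        have ht₀B : t₀ ∉ B := disjoint_left.1 hdisj' ht₀A'
        have hTB2 : T ∩ B ⊆ T \ {t₀} := fun x hx => ⟨hx.1, fun he => ht₀B (he ▸ hx.2)⟩
        have hc1 : (T ∩ B).ncard ≤ T.ncard - 1 := by
          have h1 := ncard_le_ncard hTB2 (hTfin.diff)
          have h2 := ncard_diff_singleton_of_mem ht₀T
          omega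
        have hDsub2 : D ⊆ (T ∩ B) ∪ (A' \ {t₀}) := by
          intro x hx
          rcases hDsub hx with h | h
          · exact mem_union_left _ h
          · exact mem_union_right _ ⟨h, fun he => ht₀D (he ▸ hx)⟩
        have hc2 : (A' \ {t₀}).ncard = A'.ncard - 1 := ncard_diff_singleton_of_mem ht₀A'
        have ht₀card : 1 ≤ A'.ncard := (ncard_pos hA'fin).2 ⟨t₀, ht₀A'⟩
        have hDle : D.ncard ≤ (T ∩ B).ncard + (A' \ {t₀}).ncard :=
          (ncard_le_ncard hDsub2 (hTBfin.union (hA'fin.diff))).trans (ncard_union_le _ _)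
        omega

end Main

/-- For n ∈ {2,3,4}: if every cocircuit Q of M containing T satisfies |Q| ≥ 2n - 2,
then M'_T is n-connected. -/
theorem eleSplit_nConnected_small_n {α W : Type*}
    [AddCommGroup W] [Module (ZMod 2) W]
    (n : ℕ) (hn : n ∈ ({2, 3, 4} : Set ℕ)) (M N : Matroid α) (φ : α → W) (hM : IsRep M φ)
    (hfin : M.E.Finite) (hcard : 2 * n - 2 ≤ M.E.ncard) (hconn : NConnected M n)
    (T : Set α) (hT : T ⊆ M.E) (hTcard : T.ncard = n - 1)
    (a : α) (hN : IsEleSplit M φ T a N)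
    (hQ : ∀ Q : Set α, MCocircuit M Q → T ⊆ Q → 2 * n - 2 ≤ Q.ncard) :
    NConnected N n := by
  have hn' : n = 2 ∨ n = 3 ∨ n = 4 := by simpa using hn
  have hn2 : 2 ≤ n := by omega
  have hn4 : n ≤ 4 := by omega
  intro k A B hk1 hkn hsep
  have haAB : a ∈ A ∪ B := by
    rw [hsep.1, hN.2.1]
    exact mem_insert a M.E
  rcases haAB with haA | haB
  · exact main_case hn2 hn4 hM hfin hcard hconn hT hTcard hN hQ hk1 hkn haA hsep
  · obtain ⟨h1, h2, h3, h4, h5⟩ := hsep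
    exact main_case hn2 hn4 hM hfin hcard hconn hT hTcard hN hQ hk1 hkn haB
      ⟨by rw [union_comm]; exact h1, h2.symm, h4, h3, by omega⟩
end

section
/- Let n ≥ 2, let M be an n-connected binary matroid with |E(M)| ≥ 2n-2, and let T ⊆ E(M) with |T| = n-1. Then M'_T is n-connected if and only if for every subset A ⊆ E(M) with |A| = n-2, there exists a circuit C of M with C ⊆ E(M) \ A and |C ∩ T| odd. -/
open Set

variable {α : Type*}

open Set Module Submodule

-- core linear algebra
section LinAlg
variable {W : Type*} [AddCommGroup W] [Module (ZMod 2) W]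

private lemma ES_finrank_mem (V : Submodule (ZMod 2) (W × ZMod 2)) [FiniteDimensional (ZMod 2) V]
    (h : ((0, 1) : W × ZMod 2) ∈ V) :
    finrank (ZMod 2) V
      = finrank (ZMod 2) (V.map (LinearMap.fst (ZMod 2) W (ZMod 2))) + 1 := by
  set f : V →ₗ[ZMod 2] W := (LinearMap.fst (ZMod 2) W (ZMod 2)).comp V.subtype with hf
  have hrange : LinearMap.range f = V.map (LinearMap.fst (ZMod 2) W (ZMod 2)) := by
    rw [hf, LinearMap.range_comp, Submodule.range_subtype]
  have hv0 : (⟨(0, 1), h⟩ : V) ≠ 0 := by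
    intro hc
    have : ((0, 1) : W × ZMod 2) = 0 := congrArg Subtype.val hc
    simpa [Prod.ext_iff] using this
  have hker : LinearMap.ker f = (ZMod 2) ∙ (⟨(0, 1), h⟩ : V) := by
    ext ⟨⟨w, c⟩, hv⟩
    simp only [LinearMap.mem_ker, hf, LinearMap.comp_apply, Submodule.subtype_apply,
      LinearMap.fst_apply, Submodule.mem_span_singleton]
    constructor
    · rintro rfl
      exact ⟨c, by ext <;> simp⟩
    · rintro ⟨c', hc'⟩
      have := congrArg (fun v : V => (v : W × ZMod 2).1) hc'
      simpa using this.symm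
  have hrn := LinearMap.finrank_range_add_finrank_ker f
  rw [hrange, hker, finrank_span_singleton hv0] at hrn
  omega

private lemma ES_finrank_not_mem (V : Submodule (ZMod 2) (W × ZMod 2))
    [FiniteDimensional (ZMod 2) V] (h : ((0, 1) : W × ZMod 2) ∉ V) :
    finrank (ZMod 2) V = finrank (ZMod 2) (V.map (LinearMap.fst (ZMod 2) W (ZMod 2))) := by
  set f : V →ₗ[ZMod 2] W := (LinearMap.fst (ZMod 2) W (ZMod 2)).comp V.subtype with hf
  have hrange : LinearMap.range f = V.map (LinearMap.fst (ZMod 2) W (ZMod 2)) := by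
    rw [hf, LinearMap.range_comp, Submodule.range_subtype]
  have hker : LinearMap.ker f = ⊥ := by
    rw [LinearMap.ker_eq_bot']
    rintro ⟨⟨w, c⟩, hv⟩ hm
    have hw : w = 0 := hm
    subst hw
    have hc : c = 0 := by
      by_contra hc
      have h01 : ∀ u : ZMod 2, u ≠ 0 → u = 1 := by decide
      have : c = 1 := h01 c hc
      subst this; exact h hv
    subst hc
    rfl
  have hrn := LinearMap.finrank_range_add_finrank_ker f
  rw [hrange, hker, finrank_bot] at hrn
  omega

end LinAlg
open Set Module Submodule

section Rep
variable {W : Type*} [AddCommGroup W] [Module (ZMod 2) W]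

private lemma ES_mrank_eq (M : Matroid α) (φ : α → W) (hM : IsRep M φ)
    (hfin : M.E.Finite) {X : Set α} (hX : X ⊆ M.E) :
    mrank M X = finrank (ZMod 2) (span (ZMod 2) (φ '' X)) := by
  classical
  have hXfin : X.Finite := hfin.subset hX
  haveI := FiniteDimensional.span_of_finite (ZMod 2) (hXfin.image φ)
  set d := finrank (ZMod 2) (span (ZMod 2) (φ '' X)) with hd
  have hub : ∀ m ∈ {n | ∃ I, M.Indep I ∧ I ⊆ X ∧ I.ncard = n}, m ≤ d := by
    rintro m ⟨I, hI, hIX, rfl⟩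
    have hIfin : I.Finite := hXfin.subset hIX
    haveI := hIfin.fintype
    have hli : LinearIndependent (ZMod 2) (I.restrict φ) := ((hM I).1 hI).2
    have h1 : finrank (ZMod 2) (span (ZMod 2) (Set.range (I.restrict φ))) = Fintype.card I :=
      finrank_span_eq_card hli
    rw [show Set.range (I.restrict φ) = φ '' I from Set.range_restrict _ _] at h1
    have h2 : I.ncard = Fintype.card I := by
      rw [Set.ncard_eq_toFinset_card', Set.toFinset_card]
    rw [h2, ← h1]
    exact Submodule.finrank_mono (span_mono (Set.image_mono hIX))
  have hmem : d ∈ {n | ∃ I, M.Indep I ∧ I ⊆ X ∧ I.ncard = n} := by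
    obtain ⟨b, hb_sub, hb_span, hb_li⟩ := exists_linearIndependent (ZMod 2) (φ '' X)
    have hbfin : b.Finite := (hXfin.image φ).subset hb_sub
    haveI := hbfin.fintype
    have hcardb : finrank (ZMod 2) (span (ZMod 2) b) = b.toFinset.card :=
      finrank_span_set_eq_card hb_li
    choose g hgX hgb using fun v : b => hb_sub v.2
    set I := Set.range g with hI
    have hginj : Function.Injective g := by
      intro u v huv
      have : (u : W) = v := by rw [← hgb u, ← hgb v, huv]
      exact Subtype.ext this
    have hIX : I ⊆ X := by rintro x ⟨v, rfl⟩; exact hgX v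
    have hφI : φ '' I = b := by
      rw [hI, ← Set.range_comp]
      have : (φ ∘ g) = (Subtype.val : b → W) := funext fun v => hgb v
      rw [this, Subtype.range_coe]
    have hinjOn : Set.InjOn φ I := by
      rintro x ⟨u, rfl⟩ y ⟨v, rfl⟩ hxy
      rw [hgb u, hgb v] at hxy
      exact congrArg g (Subtype.ext hxy)
    have hIli : LinearIndependent (ZMod 2) (I.restrict φ) := by
      have hmemb : ∀ x : I, φ (x : α) ∈ b := by
        rintro ⟨x, hx⟩
        rw [← hφI]; exact ⟨x, hx, rfl⟩
      have hcomp : LinearIndependent (ZMod 2)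
          ((Subtype.val : b → W) ∘ fun x : I => (⟨φ x, hmemb x⟩ : b)) := by
        apply hb_li.comp
        intro x y hxy
        have : φ (x : α) = φ (y : α) := by
          simpa [Subtype.ext_iff] using hxy
        exact Subtype.ext (hinjOn x.2 y.2 this)
      exact hcomp
    refine ⟨I, (hM I).2 ⟨hIX.trans hX, hIli⟩, hIX, ?_⟩
    have : I.ncard = b.ncard := by rw [← hφI, Set.ncard_image_of_injOn hinjOn]
    rw [this, Set.ncard_eq_toFinset_card', ← hcardb, hd, hb_span]
  exact le_antisymm (csSup_le ⟨0, ⟨∅, M.empty_indep, empty_subset _, by simp⟩⟩ hub)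
    (le_csSup ⟨d, hub⟩ hmem)

end Rep
section Circuits
variable {W : Type*} [AddCommGroup W] [Module (ZMod 2) W]

private lemma ES_cast_one_iff (m : ℕ) : ((m : ZMod 2) = 1) ↔ Odd m := by
  rw [Nat.odd_iff, show (1 : ZMod 2) = ((1 : ℕ) : ZMod 2) by norm_num,
    ZMod.natCast_eq_natCast_iff]
  unfold Nat.ModEq
  norm_num

open scoped Classical in
private lemma ES_sum_ite_T (T : Set α) (F : Finset α) :
    (∑ x ∈ F, (if x ∈ T then (1 : ZMod 2) else 0)) = (((↑F ∩ T).ncard : ZMod 2)) := by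
  classical
  rw [Finset.sum_boole]
  congr 1
  have : (↑F ∩ T) = ↑(F.filter (· ∈ T)) := by ext x; simp [and_comm]
  rw [this, Set.ncard_coe_finset]

private lemma ES_dep_of_sum_zero (M : Matroid α) (φ : α → W) (hM : IsRep M φ) {S : Finset α}
    (hS : ↑S ⊆ M.E) (hne : S.Nonempty) (h0 : ∑ x ∈ S, φ x = 0) : M.Dep ↑S := by
  refine ⟨fun hI => ?_, hS⟩
  have hli : LinearIndependent (ZMod 2) ((↑S : Set α).restrict φ) := ((hM _).1 hI).2
  have := Fintype.linearIndependent_iff.1 hli (fun _ => 1) ?_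
  · obtain ⟨i, hi⟩ := hne
    exact one_ne_zero (this ⟨i, hi⟩)
  · have : ∑ i : (↑S : Set α), φ (i : α) = ∑ x ∈ S, φ x := Finset.sum_finset_coe _ _
    simpa [Set.restrict] using this.trans h0

private lemma ES_circuit_sum (M : Matroid α) (φ : α → W) (hM : IsRep M φ) {C : Set α}
    (hC : MCircuit M C) (hCfin : C.Finite) :
    ∑ x ∈ hCfin.toFinset, φ x = 0 := by
  classical
  have hCE : C ⊆ M.E := hC.1.2
  have hnotli : ¬ LinearIndependent (ZMod 2) (C.restrict φ) := fun h =>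
    hC.1.1 ((hM C).2 ⟨hCE, h⟩)
  haveI := hCfin.fintype
  obtain ⟨g, hg0, i, hgi⟩ := Fintype.not_linearIndependent_iff.1 hnotli
  set Fl : Finset C := Finset.univ.filter (fun j : C => g j ≠ 0) with hFl
  set S : Finset α := Fl.image Subtype.val with hSdef
  have hg0' : ∑ j : C, g j • φ (j : α) = 0 := hg0
  have hsum : ∑ x ∈ S, φ x = 0 := by
    rw [hSdef, Finset.sum_image (by intro x _ y _ h; exact Subtype.ext_iff.2 h)]
    calc ∑ j ∈ Fl, φ (j : α)
        = ∑ j ∈ Fl, g j • φ (j : α) := Finset.sum_congr rfl (by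
          intro j hj
          have hj0 : g j ≠ 0 := (Finset.mem_filter.1 hj).2
          have h01 : ∀ u : ZMod 2, u ≠ 0 → u = 1 := by decide
          rw [h01 _ hj0, one_smul])
      _ = ∑ j : C, g j • φ (j : α) := by
          rw [hFl]
          exact Finset.sum_filter_of_ne (by
            intro x _ h h0x
            exact h (by rw [h0x, zero_smul]))
      _ = 0 := hg0'
  have hSsub : (↑S : Set α) ⊆ C := by
    rintro x hx
    obtain ⟨j, _, rfl⟩ := Finset.mem_image.1 hx
    exact j.2
  have hSne : S.Nonempty := ⟨i, Finset.mem_image.2 ⟨i, Finset.mem_filter.2 ⟨Finset.mem_univ _, hgi⟩, rfl⟩⟩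
  have hdep : M.Dep ↑S := ES_dep_of_sum_zero M φ hM (hSsub.trans hCE) hSne hsum
  have hCS : C ⊆ ↑S := hC.2 hdep hSsub
  have : (↑S : Set α) = C := le_antisymm hSsub hCS
  have hSeq : S = hCfin.toFinset := by
    apply Finset.coe_injective
    rw [this, Set.Finite.coe_toFinset]
  rw [← hSeq]; exact hsum

private lemma ES_dep_contains_circuit (M : Matroid α) :
    ∀ n (D : Set α), D.Finite → D.ncard ≤ n → M.Dep D → ∃ C, C ⊆ D ∧ MCircuit M C := by
  intro n
  induction n with
  | zero =>
    intro D hfin hcard hD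
    have : D = ∅ := (Set.ncard_eq_zero hfin).1 (Nat.le_zero.1 hcard)
    rw [this] at hD
    exact absurd M.empty_indep hD.1
  | succ n ih =>
    intro D hfin hcard hD
    by_cases h : ∀ D', M.Dep D' → D' ⊆ D → D ⊆ D'
    · exact ⟨D, Set.Subset.rfl, hD, fun D' h1 h2 => h D' h1 h2⟩
    · push_neg at h
      obtain ⟨D', hD', hsub, hne⟩ := h
      have hlt : D'.ncard < D.ncard := Set.ncard_lt_ncard ⟨hsub, hne⟩ hfin
      obtain ⟨C, h1, h2⟩ := ih D' (hfin.subset hsub) (by omega) hD'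
      exact ⟨C, h1.trans hsub, h2⟩

open scoped Classical in
private lemma ES_exists_odd_circuit (M : Matroid α) (φ : α → W) (hM : IsRep M φ) (T : Set α) :
    ∀ n (S : Finset α), S.card ≤ n → ↑S ⊆ M.E →
      (∑ x ∈ S, φ x = 0) →
      (∑ x ∈ S, (if x ∈ T then (1 : ZMod 2) else 0)) = 1 →
      ∃ C, MCircuit M C ∧ C ⊆ ↑S ∧ Odd ((C ∩ T).ncard) := by
  classical
  intro n
  induction n with
  | zero =>
    intro S hcard hSE h0 h1
    have : S = ∅ := Finset.card_eq_zero.1 (Nat.le_zero.1 hcard)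
    rw [this] at h1
    simp at h1
  | succ n ih =>
    intro S hcard hSE h0 h1
    have hne : S.Nonempty := by
      rcases S.eq_empty_or_nonempty with h | h
      · rw [h] at h1; simp at h1
      · exact h
    have hdep : M.Dep ↑S := ES_dep_of_sum_zero M φ hM hSE hne h0
    obtain ⟨C, hCS, hC⟩ := ES_dep_contains_circuit M (↑S : Set α).ncard ↑S
      (S.finite_toSet) le_rfl hdep
    have hCfin : C.Finite := S.finite_toSet.subset hCS
    have hsumC := ES_circuit_sum M φ hM hC hCfin
    have hCf_sub : hCfin.toFinset ⊆ S := by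
      intro x hx
      exact hCS (hCfin.mem_toFinset.1 hx)
    by_cases hodd : (∑ x ∈ hCfin.toFinset, (if x ∈ T then (1 : ZMod 2) else 0)) = 1
    · refine ⟨C, hC, hCS, ?_⟩
      rw [ES_sum_ite_T] at hodd
      rw [hCfin.coe_toFinset] at hodd
      exact (ES_cast_one_iff _).1 hodd
    · have hCne : C.Nonempty := by
        rcases C.eq_empty_or_nonempty with h | h
        · rw [h] at hC; exact absurd M.empty_indep hC.1.1
        · exact h
      have hteq : (∑ x ∈ hCfin.toFinset, (if x ∈ T then (1 : ZMod 2) else 0)) = 0 := by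
        by_contra h
        have h01 : ∀ u : ZMod 2, u ≠ 0 → u = 1 := by decide
        exact hodd (h01 _ h)
      have h0' : ∑ x ∈ S \ hCfin.toFinset, φ x = 0 := by
        have := Finset.sum_sdiff (f := φ) hCf_sub
        rw [h0] at this
        rw [hsumC] at this
        simpa using this
      have h1' : ∑ x ∈ S \ hCfin.toFinset, (if x ∈ T then (1 : ZMod 2) else 0) = 1 := by
        have := Finset.sum_sdiff (f := fun x => (if x ∈ T then (1 : ZMod 2) else 0)) hCf_sub
        rw [h1, hteq] at this
        simpa using this
      have hcard' : (S \ hCfin.toFinset).card ≤ n := by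
        have h1c : 1 ≤ (hCfin.toFinset).card := by
          obtain ⟨x, hx⟩ := hCne
          exact Finset.card_pos.2 ⟨x, hCfin.mem_toFinset.2 hx⟩
        have := Finset.card_sdiff_of_subset hCf_sub
        have hle := Finset.card_le_card hCf_sub
        omega
      obtain ⟨C', h1c, h2c, h3c⟩ := ih (S \ hCfin.toFinset) hcard'
        (fun x hx => hSE (Finset.mem_sdiff.1 hx).1) h0' h1'
      exact ⟨C', h1c, h2c.trans (fun x hx => (Finset.mem_sdiff.1 hx).1), h3c⟩

end Circuits
section Split
variable {W : Type*} [AddCommGroup W] [Module (ZMod 2) W]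

open scoped Classical in
private lemma ES_psi_ne (φ : α → W) (T : Set α) (a : α) {x : α} (hx : x ≠ a) :
    splitRep φ T a x = (φ x, if x ∈ T then (1 : ZMod 2) else 0) := by
  simp [splitRep, hx]

private lemma ES_psi_a (φ : α → W) (T : Set α) (a : α) :
    splitRep φ T a a = ((0, 1) : W × ZMod 2) := by
  simp [splitRep]

private lemma ES_map_fst (φ : α → W) (T : Set α) (a : α) {X : Set α} (hXa : a ∉ X) :
    (span (ZMod 2) (splitRep φ T a '' X)).map (LinearMap.fst (ZMod 2) W (ZMod 2))
      = span (ZMod 2) (φ '' X) := by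
  rw [Submodule.map_span]
  congr 1
  rw [← Set.image_comp]
  apply Set.image_congr
  intro x hx
  simp only [Function.comp_apply]
  rw [ES_psi_ne φ T a (fun h => hXa (h ▸ hx))]
  rfl

/-- mrank of N on a set containing `a`. -/
private lemma ES_mrank_N_insert (M N : Matroid α) (φ : α → W) (T : Set α) (a : α)
    (hM : IsRep M φ) (hfin : M.E.Finite) (ha : a ∉ M.E) (hNE : N.E = insert a M.E)
    (hNrep : IsRep N (splitRep φ T a)) {X : Set α} (hX : X ⊆ M.E) :
    mrank N (insert a X) = mrank M X + 1 := by
  have hNfin : N.E.Finite := by rw [hNE]; exact hfin.insert a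
  have hsub : insert a X ⊆ N.E := by rw [hNE]; exact Set.insert_subset_insert hX
  have hXa : a ∉ X := fun h => ha (hX h)
  rw [ES_mrank_eq N (splitRep φ T a) hNrep hNfin hsub, ES_mrank_eq M φ hM hfin hX]
  have hfd : FiniteDimensional (ZMod 2) (span (ZMod 2) (splitRep φ T a '' insert a X)) :=
    FiniteDimensional.span_of_finite _ (((hfin.subset hX).insert a).image _)
  have hmem : ((0, 1) : W × ZMod 2) ∈ span (ZMod 2) (splitRep φ T a '' insert a X) := by
    apply subset_span
    exact ⟨a, Set.mem_insert a X, ES_psi_a φ T a⟩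
  rw [ES_finrank_mem _ hmem]
  congr 1
  have himg : splitRep φ T a '' insert a X = insert ((0,1) : W × ZMod 2) (splitRep φ T a '' X) := by
    rw [Set.image_insert_eq, ES_psi_a]
  rw [himg, Submodule.map_span]
  rw [Set.image_insert_eq]
  show finrank (ZMod 2) (span (ZMod 2)
    (insert ((0:W)) (LinearMap.fst (ZMod 2) W (ZMod 2) '' (splitRep φ T a '' X)))) = _
  rw [Submodule.span_insert_zero]
  rw [← Submodule.map_span, ES_map_fst φ T a hXa]

private lemma ES_mrank_N_ge (M N : Matroid α) (φ : α → W) (T : Set α) (a : α)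
    (hM : IsRep M φ) (hfin : M.E.Finite) (ha : a ∉ M.E) (hNE : N.E = insert a M.E)
    (hNrep : IsRep N (splitRep φ T a)) {X : Set α} (hX : X ⊆ M.E) :
    mrank M X ≤ mrank N X := by
  have hNfin : N.E.Finite := by rw [hNE]; exact hfin.insert a
  have hsub : X ⊆ N.E := by rw [hNE]; exact hX.trans (Set.subset_insert a M.E)
  have hXa : a ∉ X := fun h => ha (hX h)
  rw [ES_mrank_eq N (splitRep φ T a) hNrep hNfin hsub, ES_mrank_eq M φ hM hfin hX]
  haveI : FiniteDimensional (ZMod 2) (span (ZMod 2) (splitRep φ T a '' X)) :=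
    FiniteDimensional.span_of_finite _ ((hfin.subset hX).image _)
  rw [← ES_map_fst φ T a hXa]
  exact Submodule.finrank_map_le _ _

/-- if an odd circuit is contained in X, the splitting raises the rank of X. -/
private lemma ES_mrank_N_odd (M N : Matroid α) (φ : α → W) (T : Set α) (a : α)
    (hM : IsRep M φ) (hfin : M.E.Finite) (ha : a ∉ M.E) (hNE : N.E = insert a M.E)
    (hNrep : IsRep N (splitRep φ T a)) {X : Set α} (hX : X ⊆ M.E)
    {C : Set α} (hC : MCircuit M C) (hCX : C ⊆ X) (hodd : Odd ((C ∩ T).ncard)) :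
    mrank N X = mrank M X + 1 := by
  classical
  have hNfin : N.E.Finite := by rw [hNE]; exact hfin.insert a
  have hsub : X ⊆ N.E := by rw [hNE]; exact hX.trans (Set.subset_insert a M.E)
  have hXa : a ∉ X := fun h => ha (hX h)
  have hCfin : C.Finite := (hfin.subset hX).subset hCX
  rw [ES_mrank_eq N (splitRep φ T a) hNrep hNfin hsub, ES_mrank_eq M φ hM hfin hX]
  haveI : FiniteDimensional (ZMod 2) (span (ZMod 2) (splitRep φ T a '' X)) :=
    FiniteDimensional.span_of_finite _ ((hfin.subset hX).image _)
  have hmem : ((0, 1) : W × ZMod 2) ∈ span (ZMod 2) (splitRep φ T a '' X) := by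
    have hsumeq : ∑ x ∈ hCfin.toFinset, splitRep φ T a x = ((0, 1) : W × ZMod 2) := by
      have hxa : ∀ x ∈ hCfin.toFinset, splitRep φ T a x
          = (φ x, if x ∈ T then (1 : ZMod 2) else 0) := by
        intro x hx
        exact ES_psi_ne φ T a (fun h => hXa (h ▸ hCX (hCfin.mem_toFinset.1 hx)))
      rw [Finset.sum_congr rfl hxa, Prod.ext_iff]
      constructor
      · rw [Prod.fst_sum]
        exact ES_circuit_sum M φ hM hC hCfin
      · rw [Prod.snd_sum]
        show (∑ x ∈ hCfin.toFinset, (if x ∈ T then (1 : ZMod 2) else 0)) = 1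
        rw [ES_sum_ite_T, hCfin.coe_toFinset]
        exact (ES_cast_one_iff _).2 hodd
    rw [← hsumeq]
    exact Submodule.sum_mem _ (fun x hx =>
      subset_span ⟨x, hCX (hCfin.mem_toFinset.1 hx), rfl⟩)
  rw [ES_finrank_mem _ hmem, ES_map_fst φ T a hXa]

/-- if no odd circuit is contained in X, the splitting preserves the rank of X. -/
private lemma ES_mrank_N_even (M N : Matroid α) (φ : α → W) (T : Set α) (a : α)
    (hM : IsRep M φ) (hfin : M.E.Finite) (ha : a ∉ M.E) (hNE : N.E = insert a M.E)
    (hNrep : IsRep N (splitRep φ T a)) {X : Set α} (hX : X ⊆ M.E)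
    (hno : ¬ ∃ C, MCircuit M C ∧ C ⊆ X ∧ Odd ((C ∩ T).ncard)) :
    mrank N X = mrank M X := by
  classical
  have hNfin : N.E.Finite := by rw [hNE]; exact hfin.insert a
  have hsub : X ⊆ N.E := by rw [hNE]; exact hX.trans (Set.subset_insert a M.E)
  have hXa : a ∉ X := fun h => ha (hX h)
  have hXfin : X.Finite := hfin.subset hX
  rw [ES_mrank_eq N (splitRep φ T a) hNrep hNfin hsub, ES_mrank_eq M φ hM hfin hX]
  haveI : FiniteDimensional (ZMod 2) (span (ZMod 2) (splitRep φ T a '' X)) :=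
    FiniteDimensional.span_of_finite _ (hXfin.image _)
  have hnmem : ((0, 1) : W × ZMod 2) ∉ span (ZMod 2) (splitRep φ T a '' X) := by
    intro hmem
    -- extract a finite subset-sum representation
    have himg : splitRep φ T a '' X = Set.range (X.restrict (splitRep φ T a)) :=
      (Set.range_restrict _ _).symm
    rw [himg] at hmem
    obtain ⟨c, hc⟩ := Finsupp.mem_span_range_iff_exists_finsupp.1 hmem
    set S : Finset α := c.support.image Subtype.val with hSdef
    have hSsum : ∑ x ∈ S, splitRep φ T a x = ((0, 1) : W × ZMod 2) := by
      rw [hSdef, Finset.sum_image (by intro x _ y _ h; exact Subtype.ext_iff.2 h)]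
      rw [← hc]
      rw [Finsupp.sum]
      apply Finset.sum_congr rfl
      intro j hj
      have hj0 : c j ≠ 0 := Finsupp.mem_support_iff.1 hj
      have h01 : ∀ u : ZMod 2, u ≠ 0 → u = 1 := by decide
      rw [h01 _ hj0, one_smul]
      rfl
    have hSX : (↑S : Set α) ⊆ X := by
      rintro x hx
      obtain ⟨j, _, rfl⟩ := Finset.mem_image.1 hx
      exact j.2
    have hSa : ∀ x ∈ S, x ≠ a := fun x hx h => hXa (h ▸ hSX hx)
    have hSeq : ∀ x ∈ S, splitRep φ T a x = (φ x, if x ∈ T then (1 : ZMod 2) else 0) :=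
      fun x hx => ES_psi_ne φ T a (hSa x hx)
    rw [Finset.sum_congr rfl hSeq, Prod.ext_iff, Prod.fst_sum, Prod.snd_sum] at hSsum
    obtain ⟨h0, h1⟩ := hSsum
    obtain ⟨C, hC1, hC2, hC3⟩ := ES_exists_odd_circuit M φ hM T S.card S le_rfl
      (hSX.trans hX) h0 h1
    exact hno ⟨C, hC1, hC2.trans hSX, hC3⟩
  rw [ES_finrank_not_mem _ hnmem, ES_map_fst φ T a hXa]

private lemma ES_ksep_symm {M : Matroid α} {k : ℕ} {A B : Set α}
    (h : IsKSeparation M k A B) : IsKSeparation M k B A := by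
  obtain ⟨h1, h2, h3, h4, h5⟩ := h
  exact ⟨by rw [Set.union_comm]; exact h1, h2.symm, h4, h3, by omega⟩

end Split
section MoreRank
variable {W : Type*} [AddCommGroup W] [Module (ZMod 2) W]

private lemma ES_mrank_le_ncard (M : Matroid α) (φ : α → W) (hM : IsRep M φ)
    (hfin : M.E.Finite) {X : Set α} (hX : X ⊆ M.E) : mrank M X ≤ X.ncard := by
  classical
  have hXfin := hfin.subset hX
  haveI : Fintype (φ '' X) := (hXfin.image φ).fintype
  rw [ES_mrank_eq M φ hM hfin hX]
  calc finrank (ZMod 2) (span (ZMod 2) (φ '' X)) ≤ (φ '' X).toFinset.card :=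
        finrank_span_le_card _
    _ = (φ '' X).ncard := (Set.ncard_eq_toFinset_card' _).symm
    _ ≤ X.ncard := Set.ncard_image_le hXfin

private lemma ES_mrank_mono (M : Matroid α) (φ : α → W) (hM : IsRep M φ)
    (hfin : M.E.Finite) {X Y : Set α} (hXY : X ⊆ Y) (hY : Y ⊆ M.E) :
    mrank M X ≤ mrank M Y := by
  rw [ES_mrank_eq M φ hM hfin (hXY.trans hY), ES_mrank_eq M φ hM hfin hY]
  haveI := FiniteDimensional.span_of_finite (ZMod 2) ((hfin.subset hY).image φ)
  exact Submodule.finrank_mono (span_mono (Set.image_mono hXY))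

private lemma ES_mrank_empty (M : Matroid α) (φ : α → W) (hM : IsRep M φ)
    (hfin : M.E.Finite) : mrank M (∅ : Set α) = 0 := by
  rw [ES_mrank_eq M φ hM hfin (Set.empty_subset _), Set.image_empty,
    Submodule.span_empty, finrank_bot]

end MoreRank
/-- M'_T is n-connected if and only if for every A ⊆ E(M) with |A| = n - 2 there is a
circuit C of M avoiding A and meeting T in an odd number of elements. -/
theorem eleSplit_nConnected_iff_circuit_cond {α W : Type*}
    [AddCommGroup W] [Module (ZMod 2) W]
    (n : ℕ) (hn : 2 ≤ n) (M N : Matroid α) (φ : α → W) (hM : IsRep M φ)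
    (hfin : M.E.Finite) (hcard : 2 * n - 2 ≤ M.E.ncard) (hconn : NConnected M n)
    (T : Set α) (hT : T ⊆ M.E) (hTcard : T.ncard = n - 1)
    (a : α) (hN : IsEleSplit M φ T a N) :
    NConnected N n ↔
      ∀ A ⊆ M.E, A.ncard = n - 2 →
        ∃ C : Set α, MCircuit M C ∧ C ⊆ M.E \ A ∧ Odd ((C ∩ T).ncard) := by
  obtain ⟨ha, hNE, hNrep⟩ := hN
  have hNfin : N.E.Finite := by rw [hNE]; exact hfin.insert a
  have hrN : mrank N N.E = mrank M M.E + 1 := by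
    rw [hNE]
    rw [show insert a M.E = insert a M.E from rfl]
    exact ES_mrank_N_insert M N φ T a hM hfin ha hNE hNrep Set.Subset.rfl
  constructor
  · -- n-connected ⇒ circuit condition
    intro hNconn A hA hAcard
    by_contra hno
    push_neg at hno
    have hAfin : A.Finite := hfin.subset hA
    have haA : a ∉ A := fun h => ha (hA h)
    have hsep : IsKSeparation N (n - 1) (insert a A) (M.E \ A) := by
      refine ⟨?_, ?_, ?_, ?_, ?_⟩
      · rw [Set.insert_union, Set.union_diff_cancel hA, hNE]
      · rw [Set.disjoint_left]
        rintro x (rfl | hx) hx'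
        · exact ha hx'.1
        · exact hx'.2 hx
      · rw [Set.ncard_insert_of_notMem haA hAfin, hAcard]
        omega
      · rw [Set.ncard_diff hA hAfin]
        omega
      · have h1 : mrank N (insert a A) = mrank M A + 1 :=
          ES_mrank_N_insert M N φ T a hM hfin ha hNE hNrep hA
        have h2 : mrank N (M.E \ A) = mrank M (M.E \ A) := by
          apply ES_mrank_N_even M N φ T a hM hfin ha hNE hNrep Set.diff_subset
          rintro ⟨C, hC1, hC2, hC3⟩
          exact hno C hC1 hC2 hC3
        have h3 : mrank M (M.E \ A) ≤ mrank M M.E :=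
          ES_mrank_mono M φ hM hfin Set.diff_subset Set.Subset.rfl
        have h4 : mrank M A ≤ A.ncard := ES_mrank_le_ncard M φ hM hfin hA
        rw [h1, h2, hrN]
        omega
    exact hNconn (n - 1) _ _ (by omega) (by omega) hsep
  · -- circuit condition ⇒ n-connected
    intro hcond k A B hk hkn hsep
    have main : ∀ A B : Set α, a ∈ A → ¬ IsKSeparation N k A B := by
      clear hsep A B
      rintro A B haA ⟨hun, hdis, hAc, hBc, hr⟩
      have haB : a ∉ B := fun h => Set.disjoint_left.1 hdis haA h
      have hBE : B ⊆ M.E := by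
        intro x hx
        have hx' : x ∈ A ∪ B := Or.inr hx
        rw [hun, hNE] at hx'
        rcases hx' with rfl | hx'
        · exact absurd hx haB
        · exact hx'
      set A0 := A \ {a} with hA0def
      have hA0E : A0 ⊆ M.E := by
        rintro x ⟨hx, hxa⟩
        have hx' : x ∈ A ∪ B := Or.inl hx
        rw [hun, hNE] at hx'
        rcases hx' with rfl | hx'
        · exact absurd rfl hxa
        · exact hx'
      have hA_eq : A = insert a A0 := by
        rw [hA0def, Set.insert_diff_singleton, Set.insert_eq_self.2 haA]
      have hA0B_un : A0 ∪ B = M.E := by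
        have h1 : (A ∪ B) \ {a} = M.E := by
          rw [hun, hNE]
          exact Set.insert_diff_self_of_notMem ha
        rw [← h1, Set.union_diff_distrib, hA0def,
          Set.diff_singleton_eq_self haB]
      have hA0Bdis : Disjoint A0 B := hdis.mono_left Set.diff_subset
      have hAfin : A.Finite := hNfin.subset (by rw [← hun]; exact Set.subset_union_left)
      have hA0fin : A0.Finite := hAfin.subset Set.diff_subset
      have hA0card : A0.ncard = A.ncard - 1 :=
        Set.ncard_diff_singleton_of_mem haA
      have hApos : 1 ≤ A.ncard := by
        have := Set.ncard_pos hAfin |>.2 ⟨a, haA⟩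
        omega
      have hrA : mrank N A = mrank M A0 + 1 := by
        rw [hA_eq]
        exact ES_mrank_N_insert M N φ T a hM hfin ha hNE hNrep hA0E
      have hrB_ge : mrank M B ≤ mrank N B :=
        ES_mrank_N_ge M N φ T a hM hfin ha hNE hNrep hBE
      rw [hrA, hrN] at hr
      by_cases hAk : k + 1 ≤ A.ncard
      · exact hconn k A0 B hk hkn
          ⟨hA0B_un, hA0Bdis, by omega, hBc, by omega⟩
      · have hAck : A.ncard = k := by omega
        -- find an odd circuit inside B
        obtain ⟨A', hA0A', hA'E, hA'card⟩ :=
          Set.exists_subsuperset_card_eq hA0E (by omega : A0.ncard ≤ n - 2)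
            (by omega : n - 2 ≤ M.E.ncard)
        obtain ⟨C, hC, hCsub, hCodd⟩ := hcond A' hA'E hA'card
        have hCB : C ⊆ B := by
          intro x hx
          have hxE : x ∈ M.E := (hCsub hx).1
          have hxA' : x ∉ A' := (hCsub hx).2
          have hx' : x ∈ A0 ∪ B := by rw [hA0B_un]; exact hxE
          rcases hx' with hx' | hx'
          · exact absurd (hA0A' hx') hxA'
          · exact hx'
        have hrBodd : mrank N B = mrank M B + 1 :=
          ES_mrank_N_odd M N φ T a hM hfin ha hNE hNrep hBE hC hCB hCodd
        rw [hrBodd] at hr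
        by_cases hk1 : k = 1
        · have hA0e : A0 = ∅ := by
            rw [← Set.ncard_eq_zero hA0fin] at *
            omega
          have hBeq : B = M.E := by rw [← hA0B_un, hA0e, Set.empty_union]
          have h0 : mrank M A0 = 0 := by
            rw [hA0e]; exact ES_mrank_empty M φ hM hfin
          rw [h0, hBeq] at hr
          omega
        · exact hconn (k - 1) A0 B (by omega) (by omega)
            ⟨hA0B_un, hA0Bdis, by omega, by omega, by omega⟩
    have haAB : a ∈ A ∪ B := by
      rw [hsep.1, hNE]; exact Set.mem_insert a M.E
    rcases haAB with haA | haB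
    · exact main A B haA hsep
    · exact main B A haB (ES_ksep_symm hsep)
end

section
/- Let G be an n-connected graph of girth at least n, where n ≥ 2, and let T be a set of n-1 edges of G all incident to a common vertex v of degree at least 2n-2. Then the n-point splitting graph G'_T is n-connected. -/
open Set

/-- A graph is `n`-connected if it has more than `n` vertices and deleting any fewer than
`n` vertices leaves a connected graph. -/
def GraphNConnected {V : Type*} [Fintype V] (n : ℕ) (G : SimpleGraph V) : Prop :=
  n < Fintype.card V ∧ ∀ S : Set V, S.ncard < n → (G.induce Sᶜ).Connected

/-- The point splitting of `G` at a vertex `v` with respect to a set `T` of edges incident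
to `v`.  The vertex `v` is replaced by two adjacent vertices: `some v` (named `u`), which is
joined to the other endpoints of the edges of `T`, and a new vertex `none` (named `w`),
which is joined to all remaining neighbours of `v`. -/
def pointSplit {V : Type*} (G : SimpleGraph V) (v : V) (T : Set (Sym2 V)) :
    SimpleGraph (Option V) where
  Adj x y :=
    match x, y with
    | some x, some y =>
        (x ≠ v ∧ y ≠ v ∧ G.Adj x y) ∨ (x = v ∧ y ≠ v ∧ s(v, y) ∈ T) ∨
          (y = v ∧ x ≠ v ∧ s(v, x) ∈ T)
    | some x, none => x = v ∨ (x ≠ v ∧ G.Adj v x ∧ s(v, x) ∉ T)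
    | none, some y => y = v ∨ (y ≠ v ∧ G.Adj v y ∧ s(v, y) ∉ T)
    | none, none => False
  symm := by
    constructor
    rintro (x | x) (y | y) h
    · exact h
    · exact h
    · exact h
    · simp only at h ⊢
      rcases h with ⟨hx, hy, hadj⟩ | ⟨hx, hy, hmem⟩ | ⟨hy, hx, hmem⟩
      · exact Or.inl ⟨hy, hx, hadj.symm⟩
      · exact Or.inr (Or.inr ⟨hx, hy, hmem⟩)
      · exact Or.inr (Or.inl ⟨hy, hx, hmem⟩)
  loopless := by
    constructor
    rintro (x | x) h
    · exact h
    simp only at h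
    rcases h with ⟨_, _, hadj⟩ | ⟨hx, hy, _⟩ | ⟨hx, hy, _⟩
    · exact G.loopless.irrefl x hadj
    · exact hy hx
    · exact hy hx

section Aux
variable {V : Type*} {G : SimpleGraph V} {v : V} {T : Set (Sym2 V)}

lemma pointSplit_lift {S : Set (Option V)} {K : Set V} (hvK : v ∈ K)
    (hKS : ∀ x : V, x ∈ Kᶜ → (some x : Option V) ∈ Sᶜ)
    {x y : ↥Kᶜ} (p : (G.induce Kᶜ).Walk x y) :
    ((pointSplit G v T).induce Sᶜ).Reachable ⟨some x, hKS x x.2⟩ ⟨some y, hKS y y.2⟩ := by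
  induction p with
  | nil => exact SimpleGraph.Reachable.refl _
  | @cons a b c h p ih =>
      refine SimpleGraph.Reachable.trans (SimpleGraph.Adj.reachable ?_) ih
      exact Or.inl ⟨fun hav => a.2 (by rw [hav]; exact hvK),
        fun hbv => b.2 (by rw [hbv]; exact hvK), h⟩

lemma pointSplit_lift_A {S : Set (Option V)} {K : Set V}
    (hu : (some v : Option V) ∈ Sᶜ) (hw : (none : Option V) ∈ Sᶜ)
    (hKS : ∀ x : V, x ∈ Kᶜ → (some x : Option V) ∈ Sᶜ)
    {x y : ↥Kᶜ} (p : (G.induce Kᶜ).Walk x y) :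
    ((pointSplit G v T).induce Sᶜ).Reachable ⟨some x, hKS x x.2⟩ ⟨some y, hKS y y.2⟩ := by
  induction p with
  | nil => exact SimpleGraph.Reachable.refl _
  | @cons a b c h p ih =>
      refine SimpleGraph.Reachable.trans ?_ ih
      have hab : G.Adj (a : V) (b : V) := h
      by_cases hav : (a : V) = v
      · by_cases hbv : (b : V) = v
        · exact absurd (by rw [hav, hbv] at hab; exact hab) (G.loopless.irrefl v)
        · by_cases hT : s(v, (b : V)) ∈ T
          · exact SimpleGraph.Adj.reachable
              (Or.inr (Or.inl ⟨hav, hbv, hT⟩))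
          · refine SimpleGraph.Reachable.trans
              (SimpleGraph.Adj.reachable (v := (⟨none, hw⟩ : ↥Sᶜ)) ?_)
              (SimpleGraph.Adj.reachable ?_)
            · exact Or.inl hav
            · exact Or.inr ⟨hbv, by rw [← hav]; exact hab, hT⟩
      · by_cases hbv : (b : V) = v
        · by_cases hT : s(v, (a : V)) ∈ T
          · exact SimpleGraph.Adj.reachable (Or.inr (Or.inr ⟨hbv, hav, hT⟩))
          · refine SimpleGraph.Reachable.trans
              (SimpleGraph.Adj.reachable (v := (⟨none, hw⟩ : ↥Sᶜ)) ?_)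
              (SimpleGraph.Adj.reachable ?_)
            · exact Or.inr ⟨hav, by rw [← hbv]; exact hab.symm, hT⟩
            · exact Or.inl hbv
        · exact SimpleGraph.Adj.reachable (Or.inl ⟨hav, hbv, hab⟩)

end Aux

/-- Slater's theorem, under a girth hypothesis: if G is n-connected with girth at least n and
T is a set of n - 1 edges incident to a common vertex v of degree at least 2n - 2, then the
n-point splitting graph G'_T is n-connected. -/
theorem pointSplit_nConnected {V : Type*} [Fintype V] (n : ℕ) (hn : 2 ≤ n)
    (G : SimpleGraph V) [DecidableRel G.Adj]
    (hconn : GraphNConnected n G) (hgirth : (n : ℕ∞) ≤ G.egirth)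
    (v : V) (hdeg : 2 * n - 2 ≤ G.degree v)
    (T : Set (Sym2 V)) (hTE : T ⊆ G.edgeSet) (hTv : ∀ e ∈ T, v ∈ e)
    (hTcard : T.ncard = n - 1) :
    GraphNConnected n (pointSplit G v T) := by
  classical
  obtain ⟨hcard, hdel⟩ := hconn
  -- the T-neighbours and the non-T-neighbours of v
  set NT : Set V := {x : V | s(v, x) ∈ T} with hNTdef
  set NW : Set V := {x : V | G.Adj v x ∧ s(v, x) ∉ T} with hNWdef
  have hNTadj : ∀ x ∈ NT, G.Adj v x := fun x hx => (G.mem_edgeSet).mp (hTE hx)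
  have hNTcard : NT.ncard = n - 1 := by
    have himg : (fun x : V => s(v, x)) '' NT = T := by
      apply Set.Subset.antisymm
      · rintro e ⟨x, hx, rfl⟩; exact hx
      · intro e he
        obtain ⟨y, rfl⟩ := Sym2.mem_iff_exists.mp (hTv e he)
        exact ⟨y, he, rfl⟩
    have hinj : Set.InjOn (fun x : V => s(v, x)) NT := by
      intro x _ y _ hxy
      exact Sym2.congr_right.mp hxy
    rw [← hTcard, ← himg, Set.ncard_image_of_injOn hinj]
  have hNTsub : NT ⊆ G.neighborSet v := fun x hx => hNTadj x hx
  have hNWeq : NW = G.neighborSet v \ NT := by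
    ext x; simp only [hNWdef, hNTdef, Set.mem_setOf_eq, Set.mem_diff,
      SimpleGraph.mem_neighborSet]
  have hdegeq : (G.neighborSet v).ncard = G.degree v := by
    rw [Set.ncard_eq_toFinset_card']
    rfl
  have hNWcard : n - 1 ≤ NW.ncard := by
    rw [hNWeq, Set.ncard_diff hNTsub (Set.toFinite _), hNTcard, hdegeq]
    omega
  constructor
  · simp only [Fintype.card_option]
    omega
  intro S hS
  -- basic facts about S
  set S₀ : Set V := (fun x : V => (some x : Option V)) ⁻¹' S with hS₀def
  have hS₀S : ∀ x : V, x ∈ S₀ ↔ (some x : Option V) ∈ S := fun x => Iff.rfl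
  have hS₀card : S₀.ncard ≤ S.ncard := by
    have h1 : (fun x : V => (some x : Option V)) '' S₀ ⊆ S := Set.image_preimage_subset _ _
    calc S₀.ncard = ((fun x : V => (some x : Option V)) '' S₀).ncard :=
          (Set.ncard_image_of_injective _ (Option.some_injective V)).symm
      _ ≤ S.ncard := Set.ncard_le_ncard h1 (Set.toFinite _)
  have hS₀card' : (none : Option V) ∈ S → S₀.ncard + 1 ≤ S.ncard := by
    intro hnone
    have h1 : insert (none : Option V) ((fun x : V => (some x : Option V)) '' S₀) ⊆ S := by
      rw [Set.insert_subset_iff]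
      exact ⟨hnone, Set.image_preimage_subset _ _⟩
    have h2 : (none : Option V) ∉ (fun x : V => (some x : Option V)) '' S₀ := by
      rintro ⟨x, _, hx⟩; exact Option.some_ne_none x hx
    calc S₀.ncard + 1
        = (insert (none : Option V) ((fun x : V => (some x : Option V)) '' S₀)).ncard := by
          rw [Set.ncard_insert_of_notMem h2 (Set.toFinite _),
            Set.ncard_image_of_injective _ (Option.some_injective V)]
      _ ≤ S.ncard := Set.ncard_le_ncard h1 (Set.toFinite _)
  -- nonemptiness of the complement
  have hSne : Sᶜ.Nonempty := by
    by_contra h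
    rw [Set.not_nonempty_iff_eq_empty, Set.compl_empty_iff] at h
    rw [h, Set.ncard_univ, Nat.card_eq_fintype_card, Fintype.card_option] at hS
    omega
  rw [SimpleGraph.connected_iff]
  refine ⟨?_, hSne.to_subtype⟩
  by_cases hw : (none : Option V) ∈ S <;> by_cases hu : (some v : Option V) ∈ S
  · -- Case D : both in S
    have hvS₀ : v ∈ S₀ := hu
    have hK : S₀.ncard < n := lt_of_le_of_lt hS₀card hS
    have hG := hdel S₀ hK
    intro a b
    obtain ⟨a | a, ha⟩ := a
    · exact absurd hw ha
    obtain ⟨b | b, hb⟩ := b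
    · exact absurd hw hb
    have haK : a ∈ S₀ᶜ := fun h => ha h
    have hbK : b ∈ S₀ᶜ := fun h => hb h
    have hKS : ∀ x : V, x ∈ S₀ᶜ → (some x : Option V) ∈ Sᶜ := fun x hx => hx
    exact (hG.preconnected ⟨a, haK⟩ ⟨b, hbK⟩).elim
      (fun p => pointSplit_lift hvS₀ hKS p)
  · -- Case B : none ∈ S, some v ∉ S
    set K : Set V := insert v S₀ with hKdef
    have hKcard : K.ncard < n := by
      have := hS₀card' hw
      have h1 : K.ncard ≤ S₀.ncard + 1 := by
        by_cases hvS : v ∈ S₀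
        · rw [hKdef, Set.insert_eq_of_mem hvS]; omega
        · rw [hKdef, Set.ncard_insert_of_notMem hvS (Set.toFinite _)]
      omega
    have hG := hdel K hKcard
    have hKS : ∀ x : V, x ∈ Kᶜ → (some x : Option V) ∈ Sᶜ := by
      intro x hx hxS
      exact hx (Set.mem_insert_of_mem v hxS)
    -- a T-neighbour outside S₀
    obtain ⟨t, htT, htS⟩ : ∃ t, t ∈ NT ∧ t ∉ S₀ := by
      apply Set.exists_mem_notMem_of_ncard_lt_ncard _ (Set.toFinite _)
      have := hS₀card' hw
      omega
    have htv : t ≠ v := (hNTadj t htT).ne'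
    have htK : t ∈ Kᶜ := by
      intro h
      rcases h with h | h
      · exact htv h
      · exact htS h
    have hanchor : ∀ a : ↥Sᶜ, ((pointSplit G v T).induce Sᶜ).Reachable a ⟨some v, hu⟩ := by
      rintro ⟨a | a, ha⟩
      · exact absurd hw ha
      by_cases hav : a = v
      · subst hav; exact SimpleGraph.Reachable.refl _
      have haK : a ∈ Kᶜ := by
        intro h
        rcases h with h | h
        · exact hav h
        · exact ha h
      have h1 : ((pointSplit G v T).induce Sᶜ).Reachable ⟨some a, ha⟩ ⟨some t, hKS t htK⟩ :=
        (hG.preconnected ⟨a, haK⟩ ⟨t, htK⟩).elim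
          (fun p => pointSplit_lift (Set.mem_insert v S₀) hKS p)
      refine h1.trans (SimpleGraph.Adj.reachable ?_).symm
      exact Or.inr (Or.inl ⟨rfl, htv, htT⟩)
    intro a b
    exact (hanchor a).trans (hanchor b).symm
  · -- Case C : none ∉ S, some v ∈ S
    have hvS₀ : v ∈ S₀ := hu
    have hK : S₀.ncard < n := lt_of_le_of_lt hS₀card hS
    have hG := hdel S₀ hK
    have hKS : ∀ x : V, x ∈ S₀ᶜ → (some x : Option V) ∈ Sᶜ := fun x hx => hx
    -- a non-T neighbour outside S₀
    obtain ⟨t, htW, htS⟩ : ∃ t, t ∈ NW ∧ t ∉ S₀ \ {v} := by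
      apply Set.exists_mem_notMem_of_ncard_lt_ncard _ (Set.toFinite _)
      have h1 : (S₀ \ {v}).ncard = S₀.ncard - 1 := by
        rw [Set.ncard_diff (by simpa using hvS₀) (Set.toFinite _), Set.ncard_singleton]
      have h2 : 1 ≤ S₀.ncard := Set.ncard_pos (Set.toFinite _) |>.mpr ⟨v, hvS₀⟩
      omega
    have htv : t ≠ v := htW.1.ne'
    have htS₀ : t ∉ S₀ := fun h => htS ⟨h, htv⟩
    have hanchor : ∀ a : ↥Sᶜ, ((pointSplit G v T).induce Sᶜ).Reachable a ⟨none, hw⟩ := by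
      rintro ⟨a | a, ha⟩
      · exact SimpleGraph.Reachable.refl _
      have haK : a ∈ S₀ᶜ := fun h => ha h
      have h1 : ((pointSplit G v T).induce Sᶜ).Reachable ⟨some a, ha⟩ ⟨some t, hKS t htS₀⟩ :=
        (hG.preconnected ⟨a, haK⟩ ⟨t, htS₀⟩).elim
          (fun p => pointSplit_lift hvS₀ hKS p)
      refine h1.trans (SimpleGraph.Adj.reachable ?_)
      exact Or.inr ⟨htv, htW.1, htW.2⟩
    intro a b
    exact (hanchor a).trans (hanchor b).symm
  · -- Case A : none ∉ S, some v ∉ S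
    have hK : S₀.ncard < n := lt_of_le_of_lt hS₀card hS
    have hG := hdel S₀ hK
    have hKS : ∀ x : V, x ∈ S₀ᶜ → (some x : Option V) ∈ Sᶜ := fun x hx => hx
    have hvK : v ∈ S₀ᶜ := fun h => hu h
    have hanchor : ∀ a : ↥Sᶜ, ((pointSplit G v T).induce Sᶜ).Reachable a ⟨some v, hu⟩ := by
      rintro ⟨a | a, ha⟩
      · exact (SimpleGraph.Adj.reachable (Or.inl rfl :
          ((pointSplit G v T).induce Sᶜ).Adj ⟨some v, hu⟩ ⟨none, ha⟩)).symm
      have haK : a ∈ S₀ᶜ := fun h => ha h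
      exact (hG.preconnected ⟨a, haK⟩ ⟨v, hvK⟩).elim
        (fun p => pointSplit_lift_A (S := S) hu hw hKS p)
    intro a b
    exact (hanchor a).trans (hanchor b).symm
end

section
/- Let G be a 3-connected simple graph and let T be a set of two edges incident to a vertex of G of degree at least 4. Then the 3-point splitting graph G'_T is 3-connected. -/
open Set

lemma aux_exists_nbr {V : Type*} [Fintype V] (G : SimpleGraph V) [DecidableRel G.Adj]
    (v : V) (hdeg : 4 ≤ G.degree v) (B : Set V) (hB : B.ncard ≤ 3) :
    ∃ x, G.Adj v x ∧ x ∉ B := by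
  classical
  by_contra h
  push_neg at h
  have hsub : ((G.neighborFinset v : Finset V) : Set V) ⊆ B := by
    intro x hx
    exact h x (by simpa using hx)
  have hle := Set.ncard_le_ncard hsub (Set.toFinite B)
  rw [Set.ncard_coe_finset, SimpleGraph.card_neighborFinset_eq_degree] at hle
  omega

lemma aux_reach_some {V : Type*} (G : SimpleGraph V) (v : V) (T : Set (Sym2 V))
    (S : Set (Option V)) (A : Set V)
    (hA : ∀ x : V, x ∉ A → x ≠ v ∧ some x ∉ S)
    (a b : ↥(Aᶜ : Set V)) (h : (G.induce Aᶜ).Reachable a b) :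
    ((pointSplit G v T).induce Sᶜ).Reachable
      ⟨some a, (hA a a.2).2⟩ ⟨some b, (hA b b.2).2⟩ := by
  let f : (G.induce Aᶜ) →g ((pointSplit G v T).induce Sᶜ) :=
    { toFun := fun x => ⟨some x.1, (hA x.1 x.2).2⟩,
      map_rel' := by
        rintro ⟨x, hx⟩ ⟨y, hy⟩ hxy
        exact Or.inl ⟨(hA x hx).1, (hA y hy).1, hxy⟩ }
  exact h.map f

lemma aux_reach_split {V : Type*} [DecidableEq V] (G : SimpleGraph V) (v : V) (T : Set (Sym2 V))
    (S : Set (Option V)) (A : Set V)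
    (hu : (some v : Option V) ∉ S) (hw : (none : Option V) ∉ S)
    (hA : ∀ x : V, x ∉ A → some x ∉ S)
    (a b : ↥(Aᶜ : Set V)) (h : (G.induce Aᶜ).Reachable a b) :
    ((pointSplit G v T).induce Sᶜ).Reachable
      (if _ : (a : V) = v then ⟨none, hw⟩ else ⟨some a, hA a a.2⟩)
      (if _ : (b : V) = v then ⟨none, hw⟩ else ⟨some b, hA b b.2⟩) := by
  have step : ∀ (a c : ↥(Aᶜ : Set V)), (G.induce Aᶜ).Adj a c →
      ((pointSplit G v T).induce Sᶜ).Reachable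
        (if _ : (a : V) = v then ⟨none, hw⟩ else ⟨some a, hA a a.2⟩)
        (if _ : (c : V) = v then ⟨none, hw⟩ else ⟨some c, hA c c.2⟩) := by
    intro a c hadj
    have hadj' : G.Adj (a : V) (c : V) := hadj
    split_ifs with h1 h2 h2
    · exact absurd (h1.trans h2.symm) hadj'.ne
    · -- a = v, c ≠ v
      rw [h1] at hadj'
      by_cases hTc : s(v, (c : V)) ∈ T
      · have r1 : ((pointSplit G v T).induce Sᶜ).Adj ⟨none, hw⟩ ⟨some v, hu⟩ :=
          Or.inl rfl
        have r2 : ((pointSplit G v T).induce Sᶜ).Adj ⟨some v, hu⟩ ⟨some (c : V), hA c c.2⟩ :=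
          Or.inr (Or.inl ⟨rfl, h2, hTc⟩)
        exact r1.reachable.trans r2.reachable
      · exact SimpleGraph.Adj.reachable (Or.inr ⟨h2, hadj', hTc⟩)
    · -- c = v, a ≠ v
      rw [h2] at hadj'
      by_cases hTa : s(v, (a : V)) ∈ T
      · have r1 : ((pointSplit G v T).induce Sᶜ).Adj ⟨some (a : V), hA a a.2⟩ ⟨some v, hu⟩ :=
          Or.inr (Or.inr ⟨rfl, h1, hTa⟩)
        have r2 : ((pointSplit G v T).induce Sᶜ).Adj ⟨some v, hu⟩ ⟨none, hw⟩ :=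
          Or.inl rfl
        exact r1.reachable.trans r2.reachable
      · exact SimpleGraph.Adj.reachable (Or.inr ⟨h1, hadj'.symm, hTa⟩)
    · exact SimpleGraph.Adj.reachable (Or.inl ⟨h1, h2, hadj'⟩)
  obtain ⟨p⟩ := h
  induction p with
  | nil => exact SimpleGraph.Reachable.refl _
  | cons hadj p ih => exact (step _ _ hadj).trans ih

/-- If G is a 3-connected simple graph and T is a set of two edges incident to a common
vertex v of degree at least 4, then the 3-point splitting graph G'_T is 3-connected. -/
theorem pointSplit_threeConnected {V : Type*} [Fintype V]
    (G : SimpleGraph V) [DecidableRel G.Adj]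
    (hconn : GraphNConnected 3 G)
    (v : V) (hdeg : 4 ≤ G.degree v)
    (T : Set (Sym2 V)) (hTE : T ⊆ G.edgeSet) (hTv : ∀ e ∈ T, v ∈ e)
    (hTcard : T.ncard = 2) :
    GraphNConnected 3 (pointSplit G v T) := by
  classical
  obtain ⟨hcard, hconn2⟩ := hconn
  constructor
  · rw [Fintype.card_option]; omega
  intro S hS
  obtain ⟨e₁, e₂, hee, hT⟩ := Set.ncard_eq_two.mp hTcard
  have he₁ : e₁ ∈ T := by rw [hT]; exact Set.mem_insert _ _
  have he₂ : e₂ ∈ T := by rw [hT]; exact Set.mem_insert_iff.mpr (Or.inr rfl)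
  have hv₁ := hTv e₁ he₁
  have hv₂ := hTv e₂ he₂
  set t₁ := Sym2.Mem.other hv₁ with ht₁def
  set t₂ := Sym2.Mem.other hv₂ with ht₂def
  have ht₁ : s(v, t₁) = e₁ := Sym2.other_spec hv₁
  have ht₂ : s(v, t₂) = e₂ := Sym2.other_spec hv₂
  have hadj₁ : G.Adj v t₁ := G.mem_edgeSet.mp (by rw [ht₁]; exact hTE he₁)
  have hadj₂ : G.Adj v t₂ := G.mem_edgeSet.mp (by rw [ht₂]; exact hTE he₂)
  have htne : t₁ ≠ t₂ := fun h => hee (by rw [← ht₁, ← ht₂, h])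
  have hmemT : ∀ x : V, s(v, x) ∈ T ↔ x = t₁ ∨ x = t₂ := by
    intro x
    rw [hT, Set.mem_insert_iff, Set.mem_singleton_iff, ← ht₁, ← ht₂,
      Sym2.congr_right, Sym2.congr_right]
  set S₀ : Set V := {x : V | some x ∈ S} with hS₀def
  have himgS₀ : ∀ B : Set V, (some '' B).ncard = B.ncard :=
    fun B => Set.ncard_image_of_injective B (Option.some_injective V)
  have hfinS : S.Finite := Set.toFinite S
  have hS₀2 : S₀.ncard ≤ 2 := by
    have hsub : some '' S₀ ⊆ S := by rintro o ⟨x, hx, rfl⟩; exact hx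
    have := Set.ncard_le_ncard hsub hfinS
    rw [himgS₀] at this
    omega
  by_cases hw : (none : Option V) ∈ S
  · -- none ∈ S
    have hS₀1 : S₀.ncard ≤ 1 := by
      have hsub : insert (none : Option V) (some '' S₀) ⊆ S := by
        rintro o (rfl | ⟨x, hx, rfl⟩)
        · exact hw
        · exact hx
      have h1 : (insert (none : Option V) (some '' S₀)).ncard = (some '' S₀).ncard + 1 :=
        Set.ncard_insert_of_notMem (by simp) (Set.toFinite _)
      have h2 := Set.ncard_le_ncard hsub hfinS
      rw [h1, himgS₀] at h2
      omega
    have hAcard : (insert v S₀).ncard < 3 :=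
      lt_of_le_of_lt (Set.ncard_insert_le _ _) (by omega)
    have hconnA := hconn2 (insert v S₀) hAcard
    have hA : ∀ x : V, x ∉ insert v S₀ → x ≠ v ∧ some x ∉ S := by
      intro x hx
      exact ⟨fun h => hx (by rw [h]; exact Set.mem_insert _ _),
        fun h => hx (Set.mem_insert_of_mem _ h)⟩
    have hvert : ∀ o : ↥(Sᶜ : Set (Option V)),
        (o : Option V) = some v ∨ ∃ x : V, x ∉ insert v S₀ ∧ (o : Option V) = some x := by
      rintro ⟨(_ | x), ho⟩
      · exact absurd hw ho
      · by_cases hxv : x = v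
        · subst hxv; exact Or.inl rfl
        · refine Or.inr ⟨x, ?_, rfl⟩
          intro hxA
          rcases Set.mem_insert_iff.mp hxA with h | h
          · exact hxv h
          · exact ho h
    by_cases hu : (some v : Option V) ∈ S
    · -- branch 1 : both split vertices deleted
      have hvert' : ∀ o : ↥(Sᶜ : Set (Option V)),
          ∃ x : V, x ∉ insert v S₀ ∧ (o : Option V) = some x := by
        intro o
        rcases hvert o with h | h
        · exact absurd (h ▸ o.2) (fun hc => hc hu)
        · exact h
      rw [SimpleGraph.connected_iff]
      constructor
      · intro a b
        obtain ⟨x, hxA, hax⟩ := hvert' a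
        obtain ⟨y, hyA, hby⟩ := hvert' b
        have ha : a = (⟨some x, (hA x hxA).2⟩ : ↥(Sᶜ : Set (Option V))) := Subtype.ext hax
        have hb : b = (⟨some y, (hA y hyA).2⟩ : ↥(Sᶜ : Set (Option V))) := Subtype.ext hby
        rw [ha, hb]
        exact aux_reach_some G v T S _ hA ⟨x, hxA⟩ ⟨y, hyA⟩ (hconnA.preconnected _ _)
      · obtain ⟨⟨x, hx⟩⟩ := hconnA.nonempty
        exact ⟨⟨some x, (hA x hx).2⟩⟩
    · -- branch 2 : only w deleted
      have hex : t₁ ∉ S₀ ∨ t₂ ∉ S₀ := by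
        by_contra hc
        push_neg at hc
        have hsub : ({t₁, t₂} : Set V) ⊆ S₀ := by
          rintro x (rfl | rfl)
          exacts [hc.1, hc.2]
        have := Set.ncard_le_ncard hsub (Set.toFinite _)
        rw [Set.ncard_pair htne] at this
        omega
      obtain ⟨t, htadj, htT, htS₀⟩ : ∃ t, G.Adj v t ∧ s(v, t) ∈ T ∧ t ∉ S₀ := by
        rcases hex with h | h
        · exact ⟨t₁, hadj₁, (hmemT t₁).mpr (Or.inl rfl), h⟩
        · exact ⟨t₂, hadj₂, (hmemT t₂).mpr (Or.inr rfl), h⟩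
      have htA : t ∉ insert v S₀ := by
        intro h
        rcases Set.mem_insert_iff.mp h with h | h
        · exact htadj.ne' h
        · exact htS₀ h
      have key : ∀ a : ↥(Sᶜ : Set (Option V)),
          ((pointSplit G v T).induce Sᶜ).Reachable a ⟨some t, (hA t htA).2⟩ := by
        intro a
        rcases hvert a with h | ⟨x, hxA, hax⟩
        · have ha : a = (⟨some v, hu⟩ : ↥(Sᶜ : Set (Option V))) := Subtype.ext h
          rw [ha]
          exact SimpleGraph.Adj.reachable (Or.inr (Or.inl ⟨rfl, htadj.ne', htT⟩))
        · have ha : a = (⟨some x, (hA x hxA).2⟩ : ↥(Sᶜ : Set (Option V))) := Subtype.ext hax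
          rw [ha]
          exact aux_reach_some G v T S _ hA ⟨x, hxA⟩ ⟨t, htA⟩ (hconnA.preconnected _ _)
      rw [SimpleGraph.connected_iff]
      exact ⟨fun a b => (key a).trans (key b).symm, ⟨⟨some t, (hA t htA).2⟩⟩⟩
  · by_cases hu : (some v : Option V) ∈ S
    · -- branch 3 : only u deleted
      have hvS₀ : v ∈ S₀ := hu
      have hS₀v1 : (S₀ \ {v}).ncard ≤ 1 := by
        have hsub : insert (some v) (some '' (S₀ \ {v})) ⊆ S := by
          rintro o (rfl | ⟨x, hx, rfl⟩)
          · exact hu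
          · exact hx.1
        have h1 : (insert (some v : Option V) (some '' (S₀ \ {v}))).ncard
            = (some '' (S₀ \ {v})).ncard + 1 := by
          refine Set.ncard_insert_of_notMem ?_ (Set.toFinite _)
          rintro ⟨x, hx, hxe⟩
          exact hx.2 (Set.mem_singleton_iff.mpr (Option.some_injective V hxe))
        have h2 := Set.ncard_le_ncard hsub hfinS
        rw [h1, himgS₀] at h2
        omega
      have hB : ((S₀ \ {v}) ∪ {t₁, t₂}).ncard ≤ 3 := by
        have h1 := Set.ncard_union_le (S₀ \ {v}) {t₁, t₂}
        have hp : ({t₁, t₂} : Set V).ncard = 2 := Set.ncard_pair htne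
        omega
      obtain ⟨x, hxadj, hxB⟩ := aux_exists_nbr G v hdeg _ hB
      have hxS₀ : x ∉ S₀ := fun h => hxB (Set.mem_union_left _ ⟨h, hxadj.ne'⟩)
      have hxT : s(v, x) ∉ T := by
        intro h
        rcases (hmemT x).mp h with rfl | rfl
        · exact hxB (Set.mem_union_right _ (Set.mem_insert _ _))
        · exact hxB (Set.mem_union_right _ (Set.mem_insert_iff.mpr (Or.inr rfl)))
      have hconnA := hconn2 S₀ (by omega)
      have hA : ∀ y : V, y ∉ S₀ → y ≠ v ∧ some y ∉ S := fun y hy =>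
        ⟨fun h => hy (h ▸ hvS₀), hy⟩
      have key : ∀ a : ↥(Sᶜ : Set (Option V)),
          ((pointSplit G v T).induce Sᶜ).Reachable a ⟨some x, (hA x hxS₀).2⟩ := by
        rintro ⟨(_ | y), ho⟩
        · exact SimpleGraph.Adj.reachable (Or.inr ⟨hxadj.ne', hxadj, hxT⟩)
        · have hyS₀ : y ∉ S₀ := ho
          exact aux_reach_some G v T S _ hA ⟨y, hyS₀⟩ ⟨x, hxS₀⟩ (hconnA.preconnected _ _)
      rw [SimpleGraph.connected_iff]
      exact ⟨fun a b => (key a).trans (key b).symm, ⟨⟨some x, (hA x hxS₀).2⟩⟩⟩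
    · -- branch 4 : neither deleted
      have hvS₀ : v ∉ S₀ := hu
      have hconnA := hconn2 S₀ (by omega)
      have hA : ∀ y : V, y ∉ S₀ → some y ∉ S := fun y hy => hy
      have key : ∀ a : ↥(Sᶜ : Set (Option V)),
          ((pointSplit G v T).induce Sᶜ).Reachable a ⟨none, hw⟩ := by
        rintro ⟨(_ | y), ho⟩
        · exact SimpleGraph.Reachable.refl _
        · by_cases hyv : y = v
          · subst hyv
            exact SimpleGraph.Adj.reachable (Or.inl rfl)
          · have hyS₀ : y ∉ S₀ := ho
            have hr := aux_reach_split G v T S S₀ hu hw hA ⟨y, hyS₀⟩ ⟨v, hvS₀⟩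
              (hconnA.preconnected _ _)
            rw [dif_neg hyv, dif_pos rfl] at hr
            exact hr
      rw [SimpleGraph.connected_iff]
      exact ⟨fun a b => (key a).trans (key b).symm, ⟨⟨none, hw⟩⟩⟩
end
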